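/- arXiv:2504.21122 — 2 statements merged into one kernel-verified Lean document; each statement's English description precedes it below -/
import Mathlib

section
/- In the three-level normal hierarchical model, for every node index j, the marginal law of Y_j (the pushforward of the joint law under the Y_j coordinate) equals the Gaussian measure on ℝ with mean m0 and variance 1/c0; in particular each Y_j has the same marginal law as the anchor variable W. -/
open MeasureTheory ProbabilityTheory

noncomputable section

/-- Index type for unordered pairs `j < k` of nodes. -/
abbrev PairIdx (p : ℕ) := {q : Fin p × Fin p // q.1 < q.2}

/-- Symmetric extension of a function defined on pairs `j < k`. -/
def symExt {p : ℕ} (z : PairIdx p → ℝ) (j k : Fin p) : ℝ :=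
  if h : j < k then z ⟨(j, k), h⟩ else if h' : k < j then z ⟨(k, j), h'⟩ else 0

/-- The joint law of `(W, (Z_{jk})_{j<k}, (Y_1,…,Y_p))` in the three-level normal
hierarchical model: `W ~ N(m0, 1/c0)`; given `W = w`, the `Z_{jk}` are independent
`N(w, 1/c_{jk})`; given `Z = z` (extended symmetrically), the `Y_j` are independent
`N((c0 m0 + ∑_{k≠j} c_{jk} z_{jk})/(c0 + ∑_{k≠j} c_{jk}), 1/(c0 + ∑_{k≠j} c_{jk}))`. -/
def normalHierJoint (p : ℕ) (m0 c0 : ℝ) (c : Fin p → Fin p → ℝ) :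
    Measure (ℝ × (PairIdx p → ℝ) × (Fin p → ℝ)) :=
  (gaussianReal m0 (1 / c0).toNNReal).bind fun w =>
    (Measure.pi fun q : PairIdx p =>
        gaussianReal w (1 / c q.1.1 q.1.2).toNNReal).bind fun z =>
      (Measure.pi fun j : Fin p =>
          gaussianReal
            ((c0 * m0 + ∑ k ∈ Finset.univ.erase j, c j k * symExt z j k) /
              (c0 + ∑ k ∈ Finset.univ.erase j, c j k))
            (1 / (c0 + ∑ k ∈ Finset.univ.erase j, c j k)).toNNReal).map
        fun y => (w, z, y)

open Real NNReal ENNReal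

lemma gaussPDF_mul (m : ℝ) (v v' : ℝ≥0) (hv : v ≠ 0) (hv' : v' ≠ 0) (x y : ℝ) :
    gaussianPDFReal m v x * gaussianPDFReal x v' y =
      gaussianPDFReal m (v + v') y *
        gaussianPDFReal ((v' * m + v * y) / (v + v')) (v * v' / (v + v')) x := by
  have ha : (0:ℝ) < v := lt_of_le_of_ne v.coe_nonneg (by exact_mod_cast (Ne.symm hv))
  have hb : (0:ℝ) < v' := lt_of_le_of_ne v'.coe_nonneg (by exact_mod_cast (Ne.symm hv'))
  have hab : (0:ℝ) < (v:ℝ) + v' := by linarith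
  simp only [gaussianPDFReal, NNReal.coe_div, NNReal.coe_mul, NNReal.coe_add]
  rw [mul_mul_mul_comm, mul_mul_mul_comm (√(2 * π * ((v:ℝ) + v')))⁻¹]
  congr 1
  · rw [← mul_inv, ← mul_inv, ← Real.sqrt_mul (by positivity), ← Real.sqrt_mul (by positivity)]
    congr 1
    field_simp
  · rw [← Real.exp_add, ← Real.exp_add]
    congr 1
    field_simp
    ring

lemma measurable_gaussianReal (v : ℝ≥0) : Measurable (fun x : ℝ => gaussianReal x v) := by
  by_cases hv : v = 0
  · simp only [hv, gaussianReal_zero_var]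
    exact Measure.measurable_dirac
  · apply Measure.measurable_of_measurable_coe
    intro s hs
    have h1 : ∀ x : ℝ, gaussianReal x v s = ∫⁻ y in s, gaussianPDF x v y := by
      intro x
      rw [gaussianReal_of_var_ne_zero _ hv, withDensity_apply _ hs]
    simp_rw [h1]
    have hcont : Measurable (fun p : ℝ × ℝ => gaussianPDF p.1 v p.2) := by
      apply Measurable.ennreal_ofReal
      have : Continuous (fun p : ℝ × ℝ => gaussianPDFReal p.1 v p.2) := by
        unfold gaussianPDFReal
        fun_prop
      exact this.measurable
    exact hcont.lintegral_prod_right'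

lemma gaussianReal_bind_gaussianReal (m : ℝ) (v v' : ℝ≥0) :
    (gaussianReal m v).bind (fun x => gaussianReal x v') = gaussianReal m (v + v') := by
  by_cases hv' : v' = 0
  · simp only [hv', gaussianReal_zero_var, add_zero, Measure.bind_dirac]
  by_cases hv : v = 0
  · rw [hv, gaussianReal_zero_var, Measure.dirac_bind (measurable_gaussianReal v'), zero_add]
  ext s hs
  rw [Measure.bind_apply hs (_root_.measurable_gaussianReal v').aemeasurable]
  have h1 : ∀ x : ℝ, gaussianReal x v' s = ∫⁻ y in s, gaussianPDF x v' y := fun x => by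
    rw [gaussianReal_of_var_ne_zero _ hv', withDensity_apply _ hs]
  simp_rw [h1]
  rw [gaussianReal_of_var_ne_zero _ hv,
    lintegral_withDensity_eq_lintegral_mul _ (measurable_gaussianPDF _ _)]
  swap
  · exact (Measurable.ennreal_ofReal (by unfold gaussianPDFReal; fun_prop :
      Measurable (fun p : ℝ × ℝ => gaussianPDFReal p.1 v' p.2))).lintegral_prod_right'
  have hvv' : v + v' ≠ 0 := by simp [hv]
  rw [gaussianReal_of_var_ne_zero _ hvv', withDensity_apply _ hs]
  have hmeas2 : Measurable (fun p : ℝ × ℝ => gaussianPDF p.1 v' p.2) :=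
    Measurable.ennreal_ofReal (by unfold gaussianPDFReal; fun_prop :
      Continuous (fun p : ℝ × ℝ => gaussianPDFReal p.1 v' p.2)).measurable
  calc ∫⁻ x, gaussianPDF m v x * ∫⁻ y in s, gaussianPDF x v' y
      = ∫⁻ x, ∫⁻ y in s, gaussianPDF m v x * gaussianPDF x v' y := by
        congr 1; ext x; rw [lintegral_const_mul _ (by exact (measurable_gaussianPDF x v'))]
    _ = ∫⁻ y in s, ∫⁻ x, gaussianPDF m v x * gaussianPDF x v' y := by
        rw [lintegral_lintegral_swap]
        exact (((measurable_gaussianPDF m v).comp measurable_fst).mul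
          (hmeas2.comp (measurable_fst.prodMk measurable_snd))).aemeasurable
    _ = ∫⁻ y in s, gaussianPDF m (v + v') y := by
        apply setLIntegral_congr_fun hs
        intro y _
        have : ∀ x, gaussianPDF m v x * gaussianPDF x v' y =
            gaussianPDF m (v + v') y *
              gaussianPDF ((v' * m + v * y) / (v + v')) (v * v' / (v + v')) x := by
          intro x
          simp only [gaussianPDF]
          rw [← ENNReal.ofReal_mul (gaussianPDFReal_nonneg _ _ _),
            ← ENNReal.ofReal_mul (gaussianPDFReal_nonneg _ _ _), gaussPDF_mul m v v' hv hv']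
        simp_rw [this]
        rw [lintegral_const_mul _ (measurable_gaussianPDF _ _),
          lintegral_gaussianPDF_eq_one _ (by
            intro h
            simp only [_root_.div_eq_zero_iff, mul_eq_zero, hv, hv', hvv',
              or_self, or_false, false_or] at h), mul_one]

section helpers
variable {α β γ : Type*} [MeasurableSpace α] [MeasurableSpace β] [MeasurableSpace γ]

lemma my_map_bind {μ : Measure α} {f : α → Measure β} (hf : Measurable f)
    {g : β → γ} (hg : Measurable g) :
    (μ.bind f).map g = μ.bind (fun x => (f x).map g) := by
  have hdg : Measurable fun x : β => Measure.dirac (g x) := Measure.measurable_dirac.comp hg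
  rw [← Measure.bind_dirac_eq_map _ hg, Measure.bind_bind hf.aemeasurable hdg.aemeasurable]
  congr 1
  ext x
  rw [Measure.bind_dirac_eq_map _ hg]

lemma my_bind_map {μ : Measure α} {g : α → β} (hg : Measurable g)
    {f : β → Measure γ} (hf : Measurable f) :
    (μ.map g).bind f = μ.bind (fun x => f (g x)) := by
  have hdg : Measurable fun x : α => Measure.dirac (g x) := Measure.measurable_dirac.comp hg
  rw [← Measure.bind_dirac_eq_map _ hg, Measure.bind_bind hdg.aemeasurable hf.aemeasurable]
  congr 1
  funext x
  exact Measure.dirac_bind hf (g x)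

lemma measurable_bind_kernel (ν : Measure β) [SFinite ν] {L : α → β → Measure γ}
    (hL : Measurable (Function.uncurry L)) : Measurable fun a => ν.bind (L a) := by
  apply Measure.measurable_of_measurable_coe
  intro s hs
  have hLa : ∀ a : α, Measurable (L a) := fun a => hL.comp measurable_prodMk_left
  have key : ∀ a, ν.bind (L a) s = ∫⁻ b, L a b s ∂ν := fun a => Measure.bind_apply hs (hLa a).aemeasurable
  simp only [key]
  exact Measurable.lintegral_prod_right' ((Measure.measurable_coe hs).comp hL)

lemma measurable_map_kernel (ν : Measure β) [SFinite ν] {G : α → β → γ}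
    (hG : Measurable (Function.uncurry G)) : Measurable fun a => ν.map (G a) := by
  apply Measure.measurable_of_measurable_coe
  intro s hs
  have hGa : ∀ a : α, Measurable (G a) := fun a => hG.comp measurable_prodMk_left
  have : ∀ a, ν.map (G a) s = ν (Prod.mk a ⁻¹' (Function.uncurry G ⁻¹' s)) := fun a => by
    rw [Measure.map_apply (hGa a) hs]; rfl
  simp_rw [this]
  exact measurable_measure_prodMk_left (hG hs)

end helpers

lemma bind_gauss_affine {α : Type*} [MeasurableSpace α] (μ : Measure α) {f : α → ℝ}
    (hf : Measurable f) {m : ℝ} {v : ℝ≥0} (hμf : μ.map f = gaussianReal m v) (v' : ℝ≥0) :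
    μ.bind (fun x => gaussianReal (f x) v') = gaussianReal m (v + v') := by
  have : μ.bind (fun x => gaussianReal (f x) v')
      = (μ.map f).bind (fun t => gaussianReal t v') := by
    rw [my_bind_map hf (measurable_gaussianReal v')]
  rw [this, hμf, gaussianReal_bind_gaussianReal]

lemma gauss_prod_add (m1 m2 : ℝ) (v1 v2 : ℝ≥0) :
    ((gaussianReal m1 v1).prod (gaussianReal m2 v2)).map (fun p => p.1 + p.2) =
      gaussianReal (m1 + m2) (v1 + v2) := by
  have hmeas : Measurable (fun p : ℝ × ℝ => p.1 + p.2) := measurable_fst.add measurable_snd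
  ext s hs
  rw [Measure.map_apply hmeas hs, Measure.prod_apply (hmeas hs)]
  have h1 : ∀ x : ℝ, gaussianReal m2 v2 (Prod.mk x ⁻¹' ((fun p : ℝ × ℝ => p.1 + p.2) ⁻¹' s))
      = gaussianReal (x + m2) v2 s := by
    intro x
    have : Prod.mk x ⁻¹' ((fun p : ℝ × ℝ => p.1 + p.2) ⁻¹' s) = (fun y => x + y) ⁻¹' s := rfl
    rw [this, ← Measure.map_apply (measurable_const_add x) hs, gaussianReal_map_const_add,
      add_comm m2 x]
  simp_rw [h1]
  have h2 : (gaussianReal m1 v1).bind (fun x => gaussianReal (x + m2) v2)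
      = gaussianReal (m1 + m2) (v1 + v2) := by
    apply bind_gauss_affine _ (measurable_id'.add_const m2) _ v2
    exact gaussianReal_map_add_const m2
  have hk : Measurable fun x : ℝ => gaussianReal (x + m2) v2 :=
    (measurable_gaussianReal v2).comp (measurable_id'.add_const m2)
  rw [← h2, Measure.bind_apply hs hk.aemeasurable]

lemma pi_map_eval {ι : Type*} [Fintype ι] [DecidableEq ι] (μ : ι → Measure ℝ)
    [∀ i, IsProbabilityMeasure (μ i)] (j : ι) :
    (Measure.pi μ).map (Function.eval j) = μ j := by
  ext s hs
  rw [Measure.map_apply (measurable_pi_apply j) hs, Set.eval_preimage, Measure.pi_pi]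
  refine Fintype.prod_eq_single j (fun i hi => ?_) |>.trans (by simp)
  simp [Function.update_of_ne hi]

lemma pi_gauss_translate {ι : Type*} [Fintype ι] (m : ι → ℝ) (v : ι → ℝ≥0) :
    Measure.pi (fun i => gaussianReal (m i) (v i)) =
      (Measure.pi fun i => gaussianReal 0 (v i)).map (fun z i => z i + m i) := by
  have hT : Measurable (fun z : ι → ℝ => fun i => z i + m i) :=
    measurable_pi_lambda _ fun i => (measurable_pi_apply i).add_const _
  refine Measure.pi_eq fun s hs => ?_
  rw [Measure.map_apply hT (MeasurableSet.univ_pi hs)]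
  have hpre : (fun z : ι → ℝ => fun i => z i + m i) ⁻¹' Set.pi Set.univ s
      = Set.pi Set.univ (fun i => (· + m i) ⁻¹' s i) := by
    ext z; simp [Set.mem_pi]
  rw [hpre, Measure.pi_pi]
  refine Finset.prod_congr rfl fun i _ => ?_
  rw [← Measure.map_apply (measurable_id'.add_const _) (hs i), gaussianReal_map_add_const,
    zero_add]

lemma pi_gauss_map_sum_fin : ∀ (n : ℕ) (m : Fin n → ℝ) (v : Fin n → ℝ≥0) (a : Fin n → ℝ),
    (Measure.pi fun i => gaussianReal (m i) (v i)).map (fun z => ∑ i, a i * z i)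
      = gaussianReal (∑ i, a i * m i) (∑ i, ‖a i‖₊ ^ 2 * v i) := by
  intro n
  induction n with
  | zero =>
    intro m v a
    simp only [Finset.univ_eq_empty, Finset.sum_empty]
    rw [show (fun z : Fin 0 → ℝ => (0:ℝ)) = fun _ => (0:ℝ) from rfl, Measure.map_const]
    simp [gaussianReal_zero_var]
  | succ n ih =>
    intro m v a
    set e := MeasurableEquiv.piFinSuccAbove (fun _ : Fin (n+1) => ℝ) 0 with he
    have hmp := (MeasureTheory.measurePreserving_piFinSuccAbove
      (fun i => gaussianReal (m i) (v i)) 0).map_eq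
    set F : (Fin (n+1) → ℝ) → ℝ := fun z => ∑ i, a i * z i with hF
    have hFmeas : Measurable F := by fun_prop
    have hfac : F = (F ∘ ⇑e.symm) ∘ ⇑e := by
      ext z; simp
    have step1 : (Measure.pi fun i => gaussianReal (m i) (v i)).map F
        = (((gaussianReal (m 0) (v 0)).prod
            (Measure.pi fun j : Fin n => gaussianReal (m ((0:Fin (n+1)).succAbove j))
              (v ((0:Fin (n+1)).succAbove j)))).map (F ∘ ⇑e.symm)) := by
      rw [hfac, ← Measure.map_map (by fun_prop) e.measurable, hmp]
      rfl
    have hsymm : ∀ (x : ℝ) (y : Fin n → ℝ),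
        F (e.symm (x, y)) = a 0 * x + ∑ j : Fin n, a ((0:Fin (n+1)).succAbove j) * y j := by
      intro x y
      have hred : F (e.symm (x, y)) = ∑ i, a i * (e.symm (x, y)) i := rfl
      rw [hred, Fin.sum_univ_succAbove (fun i => a i * (e.symm (x, y)) i) 0]
      have h0 : (e.symm (x, y)) 0 = x := by
        simp [he, Fin.insertNth_apply_same]
      have hsc : ∀ j : Fin n, (e.symm (x, y)) ((0 : Fin (n+1)).succAbove j) = y j := by
        intro j
        simp [he, Fin.insertNth_apply_succAbove]
      rw [h0]
      exact congrArg (a 0 * x + ·) (Finset.sum_congr rfl fun j _ => by rw [hsc j])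
    have step2 : F ∘ ⇑e.symm = (fun p : ℝ × ℝ => p.1 + p.2) ∘
        (Prod.map (fun x => a 0 * x) (fun y : Fin n → ℝ =>
          ∑ j : Fin n, a ((0:Fin (n+1)).succAbove j) * y j)) := by
      ext p
      cases p with
      | mk x y => simpa using hsymm x y
    rw [step1, step2, ← Measure.map_map (g := fun p : ℝ × ℝ => p.1 + p.2) (by fun_prop) (by fun_prop),
      ← Measure.map_prod_map _ _ (by fun_prop) (by fun_prop),
      gaussianReal_map_const_mul, ih, gauss_prod_add]
    congr 1
    · rw [Fin.sum_univ_succAbove _ 0]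
    · rw [Fin.sum_univ_succAbove (fun i => ‖a i‖₊ ^ 2 * v i) 0]
      congr 1
      ext
      push_cast
      rw [Real.norm_eq_abs, sq_abs]

lemma pi_gauss_map_sum {ι : Type*} [Fintype ι] (m : ι → ℝ) (v : ι → ℝ≥0) (a : ι → ℝ) :
    (Measure.pi fun i => gaussianReal (m i) (v i)).map (fun z => ∑ i, a i * z i)
      = gaussianReal (∑ i, a i * m i) (∑ i, ‖a i‖₊ ^ 2 * v i) := by
  classical
  set e : Fin (Fintype.card ι) ≃ ι := (Fintype.equivFin ι).symm with he
  have hmp := (MeasureTheory.measurePreserving_piCongrLeft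
    (fun i => gaussianReal (m i) (v i)) e).map_eq
  set Ee := MeasurableEquiv.piCongrLeft (fun _ : ι => ℝ) e with hEe
  set F : (ι → ℝ) → ℝ := fun z => ∑ i, a i * z i with hF
  have hFmeas : Measurable F := by fun_prop
  have step1 : (Measure.pi fun i => gaussianReal (m i) (v i)).map F
      = (Measure.pi fun i' : Fin (Fintype.card ι) =>
          gaussianReal (m (e i')) (v (e i'))).map (F ∘ ⇑Ee) := by
    rw [← hmp, Measure.map_map hFmeas Ee.measurable]
  have step2 : F ∘ ⇑Ee = fun x : Fin (Fintype.card ι) → ℝ => ∑ i', a (e i') * x i' := by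
    ext x
    simp only [Function.comp_apply, hF]
    rw [← e.sum_comp (fun i => a i * Ee x i)]
    exact Finset.sum_congr rfl fun i' _ => by
      rw [MeasurableEquiv.piCongrLeft_apply_apply]
  rw [step1, step2, pi_gauss_map_sum_fin]
  congr 1
  · exact e.sum_comp (fun i => a i * m i)
  · exact e.sum_comp (fun i => ‖a i‖₊ ^ 2 * v i)

lemma sum_pairIdx {p : ℕ} (j : Fin p) (f : Fin p → ℝ) :
    ∑ q : PairIdx p, (if q.1.1 = j then f q.1.2 else if q.1.2 = j then f q.1.1 else 0)
      = ∑ k ∈ Finset.univ.erase j, f k := by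
  classical
  rw [← Finset.sum_filter_of_ne (p := fun q : PairIdx p => q.1.1 = j ∨ q.1.2 = j)
    (by
      intro q _ hq
      by_contra h
      push_neg at h
      simp [h.1, h.2] at hq)]
  refine Finset.sum_bij' (fun q _ => if q.1.1 = j then q.1.2 else q.1.1)
    (fun k hk =>
      if h : j < k then ⟨(j, k), h⟩
      else ⟨(k, j), lt_of_le_of_ne (not_lt.mp h) (Finset.ne_of_mem_erase hk)⟩)
    ?_ ?_ ?_ ?_ ?_
  · intro q hq
    simp only [Finset.mem_filter, Finset.mem_univ, true_and] at hq
    rcases eq_or_ne q.1.1 j with h1 | h1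
    · simp only [h1, if_true, Finset.mem_erase, Finset.mem_univ, and_true]
      exact fun h => absurd (h1.trans h.symm) (ne_of_lt q.2)
    · have h2 : q.1.2 = j := hq.resolve_left h1
      simp only [h1, if_false, Finset.mem_erase, Finset.mem_univ, and_true]
      exact fun h => absurd (h.trans h2.symm) (ne_of_lt q.2)
  · intro k hk
    by_cases h : j < k <;> simp [h, Finset.mem_filter]
  · intro q hq
    simp only [Finset.mem_filter, Finset.mem_univ, true_and] at hq
    rcases eq_or_ne q.1.1 j with h1 | h1
    · simp only [h1, if_true]
      rw [dif_pos (h1 ▸ q.2)]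
      exact Subtype.ext (Prod.ext h1.symm rfl)
    · have h2 : q.1.2 = j := hq.resolve_left h1
      simp only [h1, if_false]
      rw [dif_neg (by rw [← h2]; exact not_lt.mpr (le_of_lt q.2))]
      exact Subtype.ext (Prod.ext rfl h2.symm)
  · intro k hk
    by_cases h : j < k
    · simp [h, ne_of_gt h]
    · simp only [dif_neg h]
      have : k ≠ j := Finset.ne_of_mem_erase hk
      simp [this]
  · intro q hq
    simp only [Finset.mem_filter, Finset.mem_univ, true_and] at hq
    rcases eq_or_ne q.1.1 j with h1 | h1
    · simp [h1]
    · have h2 : q.1.2 = j := hq.resolve_left h1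
      simp [h1, h2]


/-- In the three-level normal hierarchical model, the marginal law of every node `Y_j`
is the Gaussian measure with mean `m0` and variance `1/c0`; in particular each `Y_j`
has the same marginal law as the anchor variable `W`. -/
theorem normalHier_marginal_Yj (p : ℕ) (hp : 2 ≤ p) (m0 c0 : ℝ) (hc0 : 0 < c0)
    (c : Fin p → Fin p → ℝ) (hc : ∀ j k, j ≠ k → 0 < c j k)
    (hsym : ∀ j k, c k j = c j k) (j : Fin p) :
    (normalHierJoint p m0 c0 c).map (fun x => x.2.2 j) =
        gaussianReal m0 (1 / c0).toNNReal ∧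
      (normalHierJoint p m0 c0 c).map (fun x => x.2.2 j) =
        (normalHierJoint p m0 c0 c).map (fun x => x.1) := by
  classical
  set v0 : ℝ≥0 := (1 / c0).toNNReal with hv0
  set Si : Fin p → ℝ := fun i => c0 + ∑ k ∈ Finset.univ.erase i, c i k with hSi
  set μi : Fin p → (PairIdx p → ℝ) → ℝ := fun i z =>
    (c0 * m0 + ∑ k ∈ Finset.univ.erase i, c i k * symExt z i k) / Si i with hμi
  set vy : Fin p → ℝ≥0 := fun i => (1 / Si i).toNNReal with hvy
  set vq : PairIdx p → ℝ≥0 := fun q => (1 / c q.1.1 q.1.2).toNNReal with hvq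
  set Q : (PairIdx p → ℝ) → Measure (Fin p → ℝ) := fun z =>
    Measure.pi fun i => gaussianReal (μi i z) (vy i) with hQ
  set P : ℝ → Measure (PairIdx p → ℝ) := fun w =>
    Measure.pi fun q => gaussianReal w (vq q) with hP
  set L : ℝ → (PairIdx p → ℝ) → Measure (ℝ × (PairIdx p → ℝ) × (Fin p → ℝ)) :=
    fun w z => (Q z).map (fun y => (w, z, y)) with hL
  set K : ℝ → Measure (ℝ × (PairIdx p → ℝ) × (Fin p → ℝ)) := fun w => (P w).bind (L w) with hK
  have hM : normalHierJoint p m0 c0 c = (gaussianReal m0 v0).bind K := rfl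
  -- positivity facts
  have hcpos : ∀ i k : Fin p, k ∈ Finset.univ.erase i → 0 < c i k := fun i k hk =>
    hc i k (Ne.symm (Finset.ne_of_mem_erase hk))
  have hSpos : ∀ i, 0 < Si i := fun i =>
    add_pos_of_pos_of_nonneg hc0 (Finset.sum_nonneg fun k hk => (hcpos i k hk).le)
  have hqpos : ∀ q : PairIdx p, 0 < c q.1.1 q.1.2 := fun q => hc _ _ (ne_of_lt q.2)
  -- measurability of basic maps
  have hsymExt : ∀ (i k : Fin p), Measurable fun z : PairIdx p → ℝ => symExt z i k := by
    intro i k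
    unfold symExt
    split_ifs with h h'
    · exact measurable_pi_apply _
    · exact measurable_pi_apply _
    · exact measurable_const
  have hμimeas : ∀ i, Measurable (μi i) := by
    intro i
    apply Measurable.div_const
    exact measurable_const.add (Finset.measurable_sum _ fun k _ => (hsymExt i k).const_mul _)
  have hπ : Measurable fun x : ℝ × (PairIdx p → ℝ) × (Fin p → ℝ) => x.2.2 j :=
    (measurable_pi_apply j).comp (measurable_snd.comp measurable_snd)
  -- kernel measurability
  set Q0 : Measure (Fin p → ℝ) := Measure.pi fun i => gaussianReal 0 (vy i) with hQ0
  set P0 : Measure (PairIdx p → ℝ) := Measure.pi fun q => gaussianReal 0 (vq q) with hP0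
  have hQz : ∀ z, Q z = Q0.map (fun y i => y i + μi i z) := fun z => pi_gauss_translate _ _
  have hPw : ∀ w, P w = P0.map (fun z (q : PairIdx p) => z q + w) := fun w =>
    pi_gauss_translate _ _
  have hGmeas : Measurable (Function.uncurry
      (fun (wz : ℝ × (PairIdx p → ℝ)) (y : Fin p → ℝ) =>
        (wz.1, wz.2, fun i => y i + μi i wz.2))) := by
    apply Measurable.prodMk ((measurable_fst.comp measurable_fst))
    apply Measurable.prodMk ((measurable_snd.comp measurable_fst))
    exact measurable_pi_lambda _ fun i =>
      ((measurable_pi_apply i).comp measurable_snd).add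
        ((hμimeas i).comp (measurable_snd.comp measurable_fst))
  have hLuncurry : Measurable (Function.uncurry L) := by
    have : Function.uncurry L = fun wz : ℝ × (PairIdx p → ℝ) =>
        Q0.map (fun y => (wz.1, wz.2, fun i => y i + μi i wz.2)) := by
      funext wz
      show L wz.1 wz.2 = _
      rw [hL]
      simp only
      rw [hQz wz.2, Measure.map_map (by fun_prop) (by fun_prop)]
      rfl
    rw [this]
    exact measurable_map_kernel Q0 hGmeas
  have hLw : ∀ w, Measurable (L w) := fun w => hLuncurry.comp measurable_prodMk_left
  have hKmeas : Measurable K := by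
    have : K = fun w => P0.bind (fun z => L w (fun q => z q + w)) := by
      funext w
      rw [hK]
      simp only
      rw [hPw w, my_bind_map (by fun_prop) (hLw w)]
    rw [this]
    apply measurable_bind_kernel P0
    have : (Function.uncurry fun w (z : PairIdx p → ℝ) => L w fun q => z q + w)
        = Function.uncurry L ∘ (fun wz : ℝ × (PairIdx p → ℝ) =>
            (wz.1, fun q => wz.2 q + wz.1)) := rfl
    rw [this]
    exact hLuncurry.comp (measurable_fst.prodMk
      (measurable_pi_lambda _ fun q => ((measurable_pi_apply q).comp measurable_snd).add
        measurable_fst))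
  -- reduce (K w).map π to a bind of gaussians
  have instQ : ∀ z, IsProbabilityMeasure (Q z) := fun z => by
    rw [hQ]; infer_instance
  have hKmap : ∀ w, (K w).map (fun x : ℝ × (PairIdx p → ℝ) × (Fin p → ℝ) => x.2.2 j)
      = (P w).bind (fun z => gaussianReal (μi j z) (vy j)) := by
    intro w
    rw [hK]
    simp only
    rw [my_map_bind (hLw w) hπ]
    congr 1
    funext z
    rw [hL]
    simp only
    rw [Measure.map_map hπ (by fun_prop)]
    have hcomp : ((fun x : ℝ × (PairIdx p → ℝ) × (Fin p → ℝ) => x.2.2 j) ∘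
        fun y : Fin p → ℝ => (w, z, y)) = fun y : Fin p → ℝ => y j := rfl
    rw [hcomp, hQ]
    simp only
    exact pi_map_eval _ j
  -- affine representation of the conditional mean
  set T : ℝ := ∑ k ∈ Finset.univ.erase j, c j k with hT
  have hTpos : 0 < T := by
    apply Finset.sum_pos (fun k hk => hcpos j k hk)
    have : 1 < Fintype.card (Fin p) := by simp; omega
    obtain ⟨k, hk⟩ := Fintype.exists_ne_of_one_lt_card this j
    exact ⟨k, Finset.mem_erase.mpr ⟨hk, Finset.mem_univ k⟩⟩
  have hSj : Si j = c0 + T := rfl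
  have hSjpos : 0 < Si j := hSpos j
  set A : PairIdx p → ℝ := fun q =>
    if q.1.1 = j then c j q.1.2 / Si j else if q.1.2 = j then c j q.1.1 / Si j else 0 with hA
  set B : ℝ := c0 * m0 / Si j with hB
  have hmean : ∀ z : PairIdx p → ℝ, μi j z = (∑ q : PairIdx p, A q * z q) + B := by
    intro z
    have h2 : ∑ q : PairIdx p, A q * z q
        = ∑ k ∈ Finset.univ.erase j, c j k / Si j * symExt z j k := by
      rw [← sum_pairIdx j (fun k => c j k / Si j * symExt z j k)]
      refine Finset.sum_congr rfl fun q _ => ?_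
      rw [hA]
      simp only
      rcases eq_or_ne q.1.1 j with h1 | h1
      · rw [if_pos h1, if_pos h1]
        have hlt : j < q.1.2 := h1 ▸ q.2
        have : symExt z j q.1.2 = z q := by
          rw [symExt, dif_pos hlt]
          congr 1
          exact Subtype.ext (Prod.ext h1.symm rfl)
        rw [this]
      · rw [if_neg h1, if_neg h1]
        rcases eq_or_ne q.1.2 j with h2 | h2
        · rw [if_pos h2, if_pos h2]
          have hlt : q.1.1 < j := h2 ▸ q.2
          have : symExt z j q.1.1 = z q := by
            rw [symExt, dif_neg (not_lt.mpr hlt.le), dif_pos hlt]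
            congr 1
            exact Subtype.ext (Prod.ext rfl h2.symm)
          rw [this]
        · rw [if_neg h2, if_neg h2, zero_mul]
    rw [hμi]
    simp only
    rw [add_div, Finset.sum_div, h2, ← hB, add_comm]
    congr 1
    exact Finset.sum_congr rfl fun k _ => mul_div_right_comm _ _ _
  have hmeanw : ∀ w : ℝ, (∑ q : PairIdx p, A q * w) = T / Si j * w := by
    intro w
    have h2 : ∑ q : PairIdx p, A q * w
        = ∑ k ∈ Finset.univ.erase j, c j k / Si j * w := by
      rw [← sum_pairIdx j (fun k => c j k / Si j * w)]
      refine Finset.sum_congr rfl fun q _ => ?_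
      rw [hA]
      simp only
      rcases eq_or_ne q.1.1 j with h1 | h1
      · rw [if_pos h1, if_pos h1]
      · rw [if_neg h1, if_neg h1]
        rcases eq_or_ne q.1.2 j with h2 | h2
        · rw [if_pos h2, if_pos h2]
        · rw [if_neg h2, if_neg h2, zero_mul]
    rw [h2, ← Finset.sum_mul, ← Finset.sum_div, ← hT]
  have hvar : (∑ q : PairIdx p, ‖A q‖₊ ^ 2 * vq q) = (T / (Si j)^2).toNNReal := by
    apply NNReal.coe_injective
    rw [NNReal.coe_sum, Real.coe_toNNReal _ (div_nonneg hTpos.le (sq_nonneg _))]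
    have hterm : ∀ q : PairIdx p, (‖A q‖₊ ^ 2 * vq q : ℝ≥0) = ((A q)^2 * (1 / c q.1.1 q.1.2) : ℝ) := by
      intro q
      rw [hvq]
      simp only
      push_cast
      rw [Real.coe_toNNReal _ (div_nonneg zero_le_one (hqpos q).le)]
      rw [Real.norm_eq_abs, sq_abs]
    calc ∑ q : PairIdx p, ((‖A q‖₊ ^ 2 * vq q : ℝ≥0) : ℝ)
        = ∑ q : PairIdx p, ((A q)^2 * (1 / c q.1.1 q.1.2) : ℝ) :=
          Finset.sum_congr rfl fun q _ => hterm q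
      _ = ∑ k ∈ Finset.univ.erase j, (c j k / Si j)^2 * (1 / c j k) := by
          rw [← sum_pairIdx j (fun k => (c j k / Si j)^2 * (1 / c j k))]
          refine Finset.sum_congr rfl fun q _ => ?_
          rw [hA]
          simp only
          rcases eq_or_ne q.1.1 j with h1 | h1
          · rw [if_pos h1, if_pos h1, h1]
          · rw [if_neg h1, if_neg h1]
            rcases eq_or_ne q.1.2 j with h2 | h2
            · rw [if_pos h2, if_pos h2, h2, hsym q.1.1 j]
            · rw [if_neg h2, if_neg h2]
              simp
      _ = ∑ k ∈ Finset.univ.erase j, c j k / (Si j)^2 := by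
          refine Finset.sum_congr rfl fun k hk => ?_
          have hck : 0 < c j k := hcpos j k hk
          field_simp
      _ = T / (Si j)^2 := by rw [← Finset.sum_div, ← hT]
  -- law of the affine functional under P w
  have hsummeas : Measurable fun z : PairIdx p → ℝ => ∑ q : PairIdx p, A q * z q :=
    Finset.measurable_sum _ fun q _ => by fun_prop
  have hPmap : ∀ w, (P w).map (fun z => (∑ q : PairIdx p, A q * z q) + B)
      = gaussianReal (T / Si j * w + B) ((T / (Si j)^2).toNNReal) := by
    intro w
    have hcompo : (fun z : PairIdx p → ℝ => (∑ q : PairIdx p, A q * z q) + B)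
        = (· + B) ∘ (fun z => ∑ q : PairIdx p, A q * z q) := rfl
    rw [hcompo, ← Measure.map_map (measurable_id'.add_const B) hsummeas, hP]
    simp only
    rw [pi_gauss_map_sum (fun _ : PairIdx p => w) vq A, gaussianReal_map_add_const,
      hmeanw w, hvar]
  have hKpi : ∀ w, (K w).map (fun x : ℝ × (PairIdx p → ℝ) × (Fin p → ℝ) => x.2.2 j)
      = gaussianReal (T / Si j * w + B) ((T / (Si j)^2).toNNReal + vy j) := by
    intro w
    rw [hKmap w]
    have : (fun z => gaussianReal (μi j z) (vy j))
        = fun z : PairIdx p → ℝ =>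
            gaussianReal ((∑ q : PairIdx p, A q * z q) + B) (vy j) := by
      funext z
      rw [hmean z]
    rw [this]
    exact bind_gauss_affine _ (hsummeas.add_const B) (hPmap w) (vy j)
  -- outer integration over w
  have houter : (gaussianReal m0 v0).map (fun w => T / Si j * w + B)
      = gaussianReal (T / Si j * m0 + B) (NNReal.mk ((T / Si j)^2) (sq_nonneg _) * v0) := by
    have hcompo : (fun w : ℝ => T / Si j * w + B) = (· + B) ∘ ((T / Si j) * ·) := rfl
    rw [hcompo, ← Measure.map_map (measurable_id'.add_const B)
      (measurable_id'.const_mul _), gaussianReal_map_const_mul, gaussianReal_map_add_const]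
  have h1 : (normalHierJoint p m0 c0 c).map
      (fun x : ℝ × (PairIdx p → ℝ) × (Fin p → ℝ) => x.2.2 j) = gaussianReal m0 v0 := by
    rw [hM, my_map_bind hKmeas hπ]
    have : (fun w => (K w).map (fun x : ℝ × (PairIdx p → ℝ) × (Fin p → ℝ) => x.2.2 j))
        = fun w => gaussianReal (T / Si j * w + B) ((T / (Si j)^2).toNNReal + vy j) := by
      funext w
      exact hKpi w
    rw [this]
    have hres := bind_gauss_affine (gaussianReal m0 v0)
      ((measurable_id'.const_mul (T / Si j)).add_const B) houter
      ((T / (Si j)^2).toNNReal + vy j)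
    rw [hres]
    congr 1
    · rw [hB, hSj]
      field_simp
      ring
    · apply NNReal.coe_injective
      simp only [hv0, hvy, NNReal.coe_add, NNReal.coe_mul, NNReal.coe_mk]
      rw [Real.coe_toNNReal _ (div_nonneg hTpos.le (sq_nonneg _)),
        Real.coe_toNNReal _ (div_nonneg zero_le_one hSjpos.le),
        Real.coe_toNNReal _ (div_nonneg zero_le_one hc0.le)]
      rw [hSj]
      have hc0T : c0 + T ≠ 0 := by positivity
      field_simp
      ring
  -- second conjunct: marginal of W
  have instP : ∀ w, IsProbabilityMeasure (P w) := fun w => by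
    rw [hP]; infer_instance
  have h2 : (normalHierJoint p m0 c0 c).map
      (fun x : ℝ × (PairIdx p → ℝ) × (Fin p → ℝ) => x.1) = gaussianReal m0 v0 := by
    rw [hM, my_map_bind hKmeas measurable_fst]
    have hKfst : ∀ w, (K w).map
        (fun x : ℝ × (PairIdx p → ℝ) × (Fin p → ℝ) => x.1) = Measure.dirac w := by
      intro w
      rw [hK]
      simp only
      rw [my_map_bind (hLw w) measurable_fst]
      have hLfst : ∀ z, (L w z).map
          (fun x : ℝ × (PairIdx p → ℝ) × (Fin p → ℝ) => x.1) = Measure.dirac w := by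
        intro z
        rw [hL]
        simp only
        rw [Measure.map_map measurable_fst (by fun_prop)]
        have : ((fun x : ℝ × (PairIdx p → ℝ) × (Fin p → ℝ) => x.1) ∘
            fun y : Fin p → ℝ => (w, z, y)) = fun _ => w := rfl
        rw [this, Measure.map_const]
        haveI := instQ z
        simp
      have : (fun z => (L w z).map
          (fun x : ℝ × (PairIdx p → ℝ) × (Fin p → ℝ) => x.1))
          = fun _ : PairIdx p → ℝ => Measure.dirac w := funext hLfst
      rw [this, Measure.bind_const]
      haveI := instP w
      simp
    have : (fun w => (K w).map (fun x : ℝ × (PairIdx p → ℝ) × (Fin p → ℝ) => x.1))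
        = fun w => Measure.dirac w := funext hKfst
    rw [this]
    exact Measure.bind_dirac
  exact ⟨h1, h1.trans h2.symm⟩
end
end

section
/- In the inverse-beta–negative-binomial hierarchical graphical model, for every node index j, the marginal law of Y_j (pushforward of the joint law under the Y_j coordinate) equals the inverse beta distribution IBe(s0, c0 + 1); in particular each Y_j has the same marginal law as the anchor variable W. -/
open MeasureTheory ProbabilityTheory
open scoped ENNReal NNReal

noncomputable section

/-- Symmetric extension of an `ℕ`-valued function defined on pairs `j < k`. -/
def symExtN {p : ℕ} (s : PairIdx p → ℕ) (j k : Fin p) : ℕ :=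
  if h : j < k then s ⟨(j, k), h⟩ else if h' : k < j then s ⟨(k, j), h'⟩ else 0

/-- The inverse beta distribution `IBe(a, b)`: the measure on `ℝ` with density
`x^{a−1}(1+x)^{−(a+b)} Γ(a+b)/(Γ(a)Γ(b))` on `(0,∞)` with respect to Lebesgue
measure. -/
def invBetaMeasure (a b : ℝ) : Measure ℝ :=
  volume.withDensity ((Set.Ioi (0 : ℝ)).indicator fun x =>
    ENNReal.ofReal (x ^ (a - 1) * (1 + x) ^ (-(a + b)) * Real.Gamma (a + b) /
      (Real.Gamma a * Real.Gamma b)))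

/-- The negative binomial distribution `NB(m, q)` on `ℕ`, with pmf
`P(S = s) = (m+s−1 choose s) q^m (1−q)^s`. -/
def negBinomialMeasure (m : ℕ) (q : ℝ) : Measure ℕ :=
  Measure.sum fun s : ℕ =>
    ENNReal.ofReal (((m + s - 1).choose s : ℝ) * q ^ m * (1 - q) ^ s) • Measure.dirac s

/-- The joint law of `(W, (S_{jk})_{j<k}, (Y_1,…,Y_p))` in the
inverse-beta–negative-binomial hierarchical graphical model: `W ~ IBe(s0, c0 + 1)`;
given `W = w`, the `S_{jk}` are independent `NB(c_{jk}, 1/(w+1))`; given `S = s`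
(extended symmetrically), the `Y_j` are independent
`IBe(s0 + ∑_{k≠j} s_{jk}, c0 + ∑_{k≠j} c_{jk} + 1)`. -/
def invBetaNegBinomialJoint (p : ℕ) (s0 c0 : ℝ) (c : Fin p → Fin p → ℕ) :
    Measure (ℝ × (PairIdx p → ℕ) × (Fin p → ℝ)) :=
  (invBetaMeasure s0 (c0 + 1)).bind fun w =>
    (Measure.pi fun q : PairIdx p =>
        negBinomialMeasure (c q.1.1 q.1.2) (1 / (w + 1))).bind fun s =>
      (Measure.pi fun j : Fin p =>
          invBetaMeasure (s0 + ∑ k ∈ Finset.univ.erase j, (symExtN s j k : ℝ))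
            (c0 + (∑ k ∈ Finset.univ.erase j, (c j k : ℝ)) + 1)).map
        fun y => (w, s, y)

/-- Vandermonde for `Nat.multichoose`. -/
lemma multichoose_vandermonde (a b t : ℕ) :
    ∑ k ∈ Finset.range (t + 1), Nat.multichoose a k * Nat.multichoose b (t - k)
      = Nat.multichoose (a + b) t := by
  induction a generalizing t with
  | zero =>
      rw [Finset.sum_eq_single 0]
      · simp
      · rintro (_ | k) hk hne
        · simp at hne
        · simp [Nat.multichoose_zero_succ]
      · simp
  | succ a ih =>
      induction t with
      | zero => simp
      | succ t iht =>
          rw [Finset.sum_range_succ']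
          have h1 : ∀ k ∈ Finset.range (t + 1),
              Nat.multichoose (a + 1) (k + 1) * Nat.multichoose b (t + 1 - (k + 1))
                = Nat.multichoose a (k + 1) * Nat.multichoose b (t - k)
                  + Nat.multichoose (a + 1) k * Nat.multichoose b (t - k) := by
            intro k hk
            rw [Nat.multichoose_succ_succ, Nat.add_mul]
            simp
          rw [Finset.sum_congr rfl h1, Finset.sum_add_distrib]
          have h2 : ∑ k ∈ Finset.range (t + 1),
              Nat.multichoose a (k + 1) * Nat.multichoose b (t - k)
                + Nat.multichoose (a + 1) 0 * Nat.multichoose b (t + 1 - 0)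
              = ∑ k ∈ Finset.range (t + 2), Nat.multichoose a k * Nat.multichoose b (t + 1 - k) := by
            conv_rhs => rw [Finset.sum_range_succ']
            simp only [Nat.succ_sub_succ, Nat.sub_zero, Nat.multichoose_zero_right, one_mul]
          rw [add_right_comm, h2, ih (t + 1), iht]
          have hab : a + 1 + b = (a + b) + 1 := by omega
          rw [hab, Nat.multichoose_succ_succ]

/-- Convolution of multichoose over `piAntidiag`. -/
lemma multichoose_piAntidiag {ι : Type*} [DecidableEq ι] (u : Finset ι) (m : ι → ℕ) (t : ℕ) :
    ∑ f ∈ Finset.piAntidiag u t, ∏ i ∈ u, Nat.multichoose (m i) (f i)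
      = Nat.multichoose (∑ i ∈ u, m i) t := by
  classical
  induction u using Finset.cons_induction generalizing t with
  | empty =>
      rcases Nat.eq_zero_or_pos t with rfl | ht
      · simp
      · rw [Finset.piAntidiag_empty_of_ne_zero (Nat.pos_of_ne_zero ?_).ne']
        · cases t with
          | zero => omega
          | succ t => simp [Nat.multichoose_zero_succ]
        · omega
  | cons i u hi ih =>
      rw [Finset.piAntidiag_cons hi, Finset.sum_disjiUnion]
      have key : ∀ pq ∈ Finset.HasAntidiagonal.antidiagonal t,
          (∑ f ∈ (Finset.piAntidiag u pq.2).map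
              (addRightEmbedding fun j => if j = i then pq.1 else 0),
            ∏ k ∈ Finset.cons i u hi, Nat.multichoose (m k) (f k))
          = Nat.multichoose (m i) pq.1 * Nat.multichoose (∑ k ∈ u, m k) pq.2 := by
        rintro ⟨x, y⟩ hxy
        rw [Finset.sum_map]
        have : ∀ f ∈ Finset.piAntidiag u y,
            (∏ k ∈ Finset.cons i u hi,
              Nat.multichoose (m k) ((addRightEmbedding fun j => if j = i then x else 0) f k))
            = Nat.multichoose (m i) x * ∏ k ∈ u, Nat.multichoose (m k) (f k) := by
          intro f hf
          rw [Finset.mem_piAntidiag] at hf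
          have hfi : f i = 0 := by
            by_contra h
            exact hi (hf.2 i h)
          rw [Finset.prod_cons]
          congr 1
          · simp [addRightEmbedding, hfi]
          · refine Finset.prod_congr rfl fun k hk => ?_
            have : k ≠ i := fun h => hi (h ▸ hk)
            simp [addRightEmbedding, this]
        rw [Finset.sum_congr rfl this, ← Finset.mul_sum, ih]
      rw [Finset.sum_congr rfl key, Finset.Nat.sum_antidiagonal_eq_sum_range_succ_mk,
        Finset.sum_cons]
      simpa using multichoose_vandermonde (m i) (∑ k ∈ u, m k) t

/-- pmf of negative binomial, in `ℝ≥0∞`. -/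
def nbp (m : ℕ) (q : ℝ) (s : ℕ) : ℝ≥0∞ :=
  ENNReal.ofReal ((Nat.multichoose m s : ℝ) * q ^ m * (1 - q) ^ s)

lemma choose_eq_multichoose (m s : ℕ) : (m + s - 1).choose s = Nat.multichoose m s := by
  rw [Nat.multichoose_eq]

lemma negBinomialMeasure_singleton (m : ℕ) (q : ℝ) (n : ℕ) :
    negBinomialMeasure m q {n} = nbp m q n := by
  rw [negBinomialMeasure, Measure.sum_apply _ (measurableSet_singleton n)]
  rw [tsum_eq_single n]
  · simp [nbp, choose_eq_multichoose]
  · intro s hs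
    simp [Measure.dirac_apply' _ (measurableSet_singleton n), Set.indicator,
      Set.mem_singleton_iff, hs]

instance nb_sigmaFinite (m : ℕ) (q : ℝ) : SigmaFinite (negBinomialMeasure m q) := by
  apply Measure.sigmaFinite_of_countable (S := Set.range (fun n : ℕ => ({n} : Set ℕ)))
    (Set.countable_range _)
  · rintro s ⟨n, rfl⟩
    rw [negBinomialMeasure_singleton]
    exact ENNReal.ofReal_lt_top
  · ext n
    simp

lemma nbp_tsum (m : ℕ) {q : ℝ} (hq0 : 0 < q) (hq1 : q ≤ 1) : ∑' s, nbp m q s = 1 := by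
  cases m with
  | zero =>
      rw [tsum_eq_single 0]
      · simp [nbp]
      · rintro (_ | s) hs
        · simp at hs
        · simp [nbp, Nat.multichoose_zero_succ]
  | succ n =>
      have hr : ‖1 - q‖ < 1 := by
        rw [Real.norm_eq_abs, abs_lt]; constructor <;> linarith
      have h1 := hasSum_choose_mul_geometric_of_norm_lt_one (𝕜 := ℝ) n hr
      have h2 : (1 : ℝ) - (1 - q) = q := by ring
      rw [h2] at h1
      have h3 := h1.mul_left (q ^ (n + 1))
      have h4 : q ^ (n + 1) * (1 / q ^ (n + 1)) = 1 := by
        field_simp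
      rw [h4] at h3
      have hterm : ∀ s : ℕ, nbp (n + 1) q s
          = ENNReal.ofReal (q ^ (n + 1) * (((s + n).choose n : ℝ) * (1 - q) ^ s)) := by
        intro s
        unfold nbp
        congr 1
        have : Nat.multichoose (n + 1) s = (s + n).choose n := by
          rw [Nat.multichoose_eq]
          have h5 : n + 1 + s - 1 = s + n := by omega
          rw [h5, ← Nat.choose_symm (by omega : n ≤ s + n)]
          congr 1
          omega
        rw [this]; ring
      rw [tsum_congr hterm, ← ENNReal.ofReal_tsum_of_nonneg, h3.tsum_eq, ENNReal.ofReal_one]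
      · intro s
        have : (0:ℝ) ≤ 1 - q := by linarith
        positivity
      · exact h3.summable

theorem nb_isProbability (m : ℕ) {q : ℝ} (hq0 : 0 < q) (hq1 : q ≤ 1) :
    IsProbabilityMeasure (negBinomialMeasure m q) := by
  constructor
  have : (Set.univ : Set ℕ) = ⋃ n : ℕ, {n} := by ext n; simp
  rw [this, measure_iUnion (fun i j hij => by simpa using hij)
    (fun n => measurableSet_singleton n)]
  simp_rw [negBinomialMeasure_singleton]
  exact nbp_tsum m hq0 hq1

/-- pmf convolution over `piAntidiag`. -/
lemma nbp_piAntidiag_sum {ι : Type*} [Fintype ι] [DecidableEq ι] (m : ι → ℕ) {q : ℝ}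
    (hq0 : 0 ≤ q) (hq1 : q ≤ 1) (t : ℕ) :
    ∑ f ∈ Finset.piAntidiag Finset.univ t, ∏ i, nbp (m i) q (f i)
      = nbp (∑ i, m i) q t := by
  have h1q : (0:ℝ) ≤ 1 - q := by linarith
  have key : ∀ f ∈ Finset.piAntidiag Finset.univ t,
      ∏ i, nbp (m i) q (f i)
        = ENNReal.ofReal ((∏ i, (Nat.multichoose (m i) (f i) : ℝ))
            * q ^ (∑ i, m i) * (1 - q) ^ t) := by
    intro f hf
    rw [Finset.mem_piAntidiag] at hf
    simp only [nbp]
    rw [← ENNReal.ofReal_prod_of_nonneg (fun i _ => by positivity)]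
    congr 1
    rw [Finset.prod_mul_distrib, Finset.prod_mul_distrib, Finset.prod_pow_eq_pow_sum,
      Finset.prod_pow_eq_pow_sum, hf.1]
  have hmc : ∑ f ∈ Finset.piAntidiag (Finset.univ : Finset ι) t,
      ∏ i, (Nat.multichoose (m i) (f i) : ℝ)
        = (Nat.multichoose (∑ i, m i) t : ℝ) := by
    rw [← multichoose_piAntidiag (Finset.univ : Finset ι) m t]
    push_cast
    rfl
  rw [Finset.sum_congr rfl key, ← ENNReal.ofReal_sum_of_nonneg (fun f _ => by positivity), nbp]
  congr 1
  rw [← Finset.sum_mul, ← Finset.sum_mul, hmc]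

/-- The sum of independent negative binomials (same `q`) is negative binomial. -/
lemma negBinomial_pi_map_sum {ι : Type*} [Fintype ι] [DecidableEq ι] (m : ι → ℕ) {q : ℝ}
    (hq0 : 0 ≤ q) (hq1 : q ≤ 1) :
    (Measure.pi fun i => negBinomialMeasure (m i) q).map (fun f => ∑ i, f i)
      = negBinomialMeasure (∑ i, m i) q := by
  apply Measure.ext_of_singleton
  intro t
  rw [Measure.map_apply (measurable_of_countable _) (measurableSet_singleton t),
    negBinomialMeasure_singleton]
  have hpre : (fun f : ι → ℕ => ∑ i, f i) ⁻¹' {t}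
      = ↑(Finset.piAntidiag (Finset.univ : Finset ι) t) := by
    ext f
    simp [Finset.mem_piAntidiag]
  rw [hpre, ← nbp_piAntidiag_sum m hq0 hq1 t]
  have : (↑(Finset.piAntidiag (Finset.univ : Finset ι) t) : Set (ι → ℕ))
      = ⋃ f ∈ Finset.piAntidiag (Finset.univ : Finset ι) t, {f} := by ext g; simp
  rw [this, measure_biUnion_finset ?_ (fun f _ => measurableSet_singleton f)]
  · refine Finset.sum_congr rfl fun f _ => ?_
    have : ({f} : Set (ι → ℕ)) = Set.pi Set.univ (fun i => {f i}) := by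
      rw [Set.univ_pi_singleton]
    rw [this, Measure.pi_pi]
    exact Finset.prod_congr rfl fun i _ => negBinomialMeasure_singleton _ _ _
  · intro f _ g _ hfg
    simp [Set.disjoint_singleton, hfg]

/-- The real Beta function integral on `(0,1)`. -/
lemma real_beta_integral {a b : ℝ} (ha : 0 < a) (hb : 0 < b) :
    ∫ x in (0:ℝ)..1, x ^ (a - 1) * (1 - x) ^ (b - 1)
      = Real.Gamma a * Real.Gamma b / Real.Gamma (a + b) := by
  have hGamma := Complex.Gamma_mul_Gamma_eq_betaIntegral
    (s := (a:ℂ)) (t := (b:ℂ)) (by simpa using ha) (by simpa using hb)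
  have hEq : Complex.betaIntegral (a:ℂ) (b:ℂ)
      = ((∫ x in (0:ℝ)..1, x ^ (a - 1) * (1 - x) ^ (b - 1) : ℝ) : ℂ) := by
    rw [Complex.betaIntegral, ← intervalIntegral.integral_ofReal]
    apply intervalIntegral.integral_congr
    intro x hx
    rw [Set.uIcc_of_le (by norm_num : (0:ℝ) ≤ 1)] at hx
    have hx0 : (0:ℝ) ≤ x := hx.1
    have hx1 : (0:ℝ) ≤ 1 - x := by linarith [hx.2]
    push_cast
    rw [Complex.ofReal_cpow hx0, Complex.ofReal_cpow hx1]
    push_cast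
    ring_nf
  rw [hEq] at hGamma
  have hG : (Complex.Gamma (a:ℂ)) * Complex.Gamma (b:ℂ)
      = ((Real.Gamma a * Real.Gamma b : ℝ) : ℂ) := by
    rw [Complex.Gamma_ofReal, Complex.Gamma_ofReal]; push_cast; ring
  have hG2 : Complex.Gamma ((a:ℂ) + (b:ℂ)) = ((Real.Gamma (a+b) : ℝ) : ℂ) := by
    rw [show ((a:ℂ) + (b:ℂ)) = ((a + b : ℝ) : ℂ) by push_cast; ring, Complex.Gamma_ofReal]
  rw [hG, hG2] at hGamma
  have hGab : Real.Gamma (a + b) ≠ 0 := (Real.Gamma_pos_of_pos (by linarith)).ne'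
  rw [← Complex.ofReal_mul] at hGamma
  have hre := Complex.ofReal_inj.mp hGamma
  rw [eq_div_iff hGab]
  linarith [hre]

lemma beta_integrableOn {a b : ℝ} (ha : 0 < a) (hb : 0 < b) :
    IntegrableOn (fun x : ℝ => x ^ (a - 1) * (1 - x) ^ (b - 1)) (Set.Ioc 0 1) := by
  have h := Complex.betaIntegral_convergent (u := (a:ℂ)) (v := (b:ℂ))
    (by simpa using ha) (by simpa using hb)
  rw [intervalIntegrable_iff_integrableOn_Ioc_of_le (by norm_num : (0:ℝ) ≤ 1)] at h
  have hre := h.re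
  apply hre.congr
  apply (ae_restrict_iff' measurableSet_Ioc).2
  apply Filter.Eventually.of_forall
  intro x hx
  have hx0 : (0:ℝ) ≤ x := hx.1.le
  have hx1 : (0:ℝ) ≤ 1 - x := by linarith [hx.2]
  have hc : ((x:ℂ)) ^ ((a:ℂ) - 1) * (1 - (x:ℂ)) ^ ((b:ℂ) - 1)
      = ((x ^ (a - 1) * (1 - x) ^ (b - 1) : ℝ) : ℂ) := by
    push_cast
    rw [Complex.ofReal_cpow hx0, Complex.ofReal_cpow hx1]
    push_cast
    ring_nf
  simp [hc]

/-- Change of variables `x = u / (1 - u)` for the inverse-beta integral. -/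
lemma invBeta_integral_eq {a b : ℝ} (ha : 0 < a) (hb : 0 < b) :
    (∫ x in Set.Ioi (0:ℝ), x ^ (a - 1) * (1 + x) ^ (-(a + b)))
        = Real.Gamma a * Real.Gamma b / Real.Gamma (a + b)
      ∧ IntegrableOn (fun x : ℝ => x ^ (a - 1) * (1 + x) ^ (-(a + b))) (Set.Ioi 0) := by
  set f : ℝ → ℝ := fun u => u / (1 - u) with hf
  set f' : ℝ → ℝ := fun u => 1 / (1 - u) ^ 2 with hf'
  set g : ℝ → ℝ := fun x => x ^ (a - 1) * (1 + x) ^ (-(a + b)) with hg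
  have hderiv : ∀ u ∈ Set.Ioo (0:ℝ) 1, HasDerivWithinAt f (f' u) (Set.Ioo 0 1) u := by
    intro u hu
    have h1 : (1:ℝ) - u ≠ 0 := by simp only [Set.mem_Ioo] at hu; intro h; linarith [hu.2]
    have hd : HasDerivAt f ((1 * (1 - u) - u * (0 - 1)) / (1 - u) ^ 2) u :=
      (hasDerivAt_id u).div ((hasDerivAt_const u 1).sub (hasDerivAt_id u)) h1
    have h2 : (1 * (1 - u) - u * (0 - 1)) / (1 - u) ^ 2 = f' u := by
      simp only [hf']; field_simp; ring
    exact (h2 ▸ hd).hasDerivWithinAt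
  have hinj : Set.InjOn f (Set.Ioo 0 1) := by
    intro u hu v hv huv
    simp only [Set.mem_Ioo] at hu hv
    have hu1 : (1:ℝ) - u ≠ 0 := by intro h; linarith [hu.2]
    have hv1 : (1:ℝ) - v ≠ 0 := by intro h; linarith [hv.2]
    simp only [hf] at huv
    field_simp at huv
    linarith [huv]
  have himg : f '' Set.Ioo 0 1 = Set.Ioi (0:ℝ) := by
    ext x
    simp only [Set.mem_image, Set.mem_Ioo, Set.mem_Ioi]
    constructor
    · rintro ⟨u, hu, rfl⟩
      exact div_pos hu.1 (by linarith [hu.2])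
    · intro hx
      refine ⟨x / (1 + x), ⟨div_pos hx (by linarith), ?_⟩, ?_⟩
      · rw [div_lt_one (by linarith)]; linarith
      · have hx1 : (1:ℝ) + x ≠ 0 := by intro h; linarith
        simp only [hf]
        field_simp
        ring
  have hgcongr : ∀ u ∈ Set.Ioo (0:ℝ) 1,
      |f' u| • g (f u) = u ^ (a - 1) * (1 - u) ^ (b - 1) := by
    intro u hu
    simp only [Set.mem_Ioo] at hu
    have hu0 : 0 < u := hu.1
    have ht : 0 < 1 - u := by linarith [hu.2]
    have h1pf : 1 + f u = 1 / (1 - u) := by simp only [hf]; field_simp; ring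
    have e1 : f u ^ (a - 1) = u ^ (a - 1) / (1 - u) ^ (a - 1) := by
      simp only [hf]; exact Real.div_rpow hu0.le ht.le (a - 1)
    have e3 : ((1:ℝ) / (1 - u)) ^ (-(a + b)) = (1 - u) ^ (a + b) := by
      rw [one_div, Real.inv_rpow ht.le, Real.rpow_neg ht.le, inv_inv]
    have e5 : (1 - u) ^ (a + b) = (1 - u) ^ (a - 1) * (1 - u) ^ (2:ℕ) * (1 - u) ^ (b - 1) := by
      rw [← Real.rpow_natCast (1 - u) 2, ← Real.rpow_add ht, ← Real.rpow_add ht]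
      norm_num
      congr 1
      ring
    have habs : |f' u| = 1 / (1 - u) ^ 2 := by
      simp only [hf']
      exact abs_of_pos (by positivity)
    rw [smul_eq_mul, habs]
    show 1 / (1 - u) ^ 2 * (f u ^ (a - 1) * (1 + f u) ^ (-(a + b)))
        = u ^ (a - 1) * (1 - u) ^ (b - 1)
    rw [e1, h1pf, e3, e5]
    have hT1 : ((1 - u):ℝ) ^ (a - 1) ≠ 0 := (Real.rpow_pos_of_pos ht _).ne'
    have hT2 : ((1 - u):ℝ) ^ (2:ℕ) ≠ 0 := pow_ne_zero _ ht.ne'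
    field_simp
  have hchange := integral_image_eq_integral_abs_deriv_smul measurableSet_Ioo hderiv hinj g
  have hint : IntegrableOn (fun u => |f' u| • g (f u)) (Set.Ioo 0 1) := by
    apply IntegrableOn.congr_fun
      ((beta_integrableOn ha hb).mono_set Set.Ioo_subset_Ioc_self)
      (fun u hu => (hgcongr u hu).symm) measurableSet_Ioo
  have hii : IntegrableOn g (Set.Ioi (0:ℝ)) := by
    rw [← himg]
    rw [integrableOn_image_iff_integrableOn_abs_deriv_smul measurableSet_Ioo hderiv hinj]
    exact hint
  constructor
  · rw [← himg, hchange, setIntegral_congr_fun measurableSet_Ioo hgcongr,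
      ← integral_Ioc_eq_integral_Ioo,
      ← intervalIntegral.integral_of_le (by norm_num : (0:ℝ) ≤ 1)]
    exact real_beta_integral ha hb
  · exact hii

lemma invBeta_lintegral {a b : ℝ} (ha : 0 < a) (hb : 0 < b) :
    ∫⁻ x in Set.Ioi (0:ℝ), ENNReal.ofReal (x ^ (a - 1) * (1 + x) ^ (-(a + b)))
      = ENNReal.ofReal (Real.Gamma a * Real.Gamma b / Real.Gamma (a + b)) := by
  obtain ⟨hval, hint⟩ := invBeta_integral_eq ha hb
  rw [← ofReal_integral_eq_lintegral_ofReal hint ?_, hval]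
  apply (ae_restrict_iff' measurableSet_Ioi).2
  apply Filter.Eventually.of_forall
  intro x hx
  have hx0 : (0:ℝ) < x := hx
  positivity

lemma measurable_invBeta_dens (a b : ℝ) :
    Measurable fun x : ℝ => x ^ (a - 1) * (1 + x) ^ (-(a + b)) := by
  fun_prop

lemma invBetaMeasure_apply {a b : ℝ} {s : Set ℝ} (hs : MeasurableSet s) :
    invBetaMeasure a b s
      = ∫⁻ x in s, (Set.Ioi (0 : ℝ)).indicator (fun x =>
          ENNReal.ofReal (x ^ (a - 1) * (1 + x) ^ (-(a + b)) * Real.Gamma (a + b) /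
            (Real.Gamma a * Real.Gamma b))) x := by
  rw [invBetaMeasure, withDensity_apply _ hs]

lemma invBeta_isProbability {a b : ℝ} (ha : 0 < a) (hb : 0 < b) :
    IsProbabilityMeasure (invBetaMeasure a b) := by
  have hGa := Real.Gamma_pos_of_pos ha
  have hGb := Real.Gamma_pos_of_pos hb
  have hGab := Real.Gamma_pos_of_pos (by linarith : 0 < a + b)
  constructor
  rw [invBetaMeasure_apply MeasurableSet.univ, Measure.restrict_univ,
    lintegral_indicator measurableSet_Ioi]
  have hcong : ∀ x ∈ Set.Ioi (0:ℝ),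
      ENNReal.ofReal (x ^ (a - 1) * (1 + x) ^ (-(a + b)) * Real.Gamma (a + b) /
          (Real.Gamma a * Real.Gamma b))
        = ENNReal.ofReal (x ^ (a - 1) * (1 + x) ^ (-(a + b)))
            * ENNReal.ofReal (Real.Gamma (a + b) / (Real.Gamma a * Real.Gamma b)) := by
    intro x hx
    have hx0 : (0:ℝ) < x := hx
    rw [← ENNReal.ofReal_mul (by positivity)]
    congr 1
    field_simp
  rw [setLIntegral_congr_fun measurableSet_Ioi hcong,
    lintegral_mul_const _ ((measurable_invBeta_dens a b).ennreal_ofReal),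
    invBeta_lintegral ha hb, ← ENNReal.ofReal_mul (by positivity)]
  rw [show Real.Gamma a * Real.Gamma b / Real.Gamma (a + b)
      * (Real.Gamma (a + b) / (Real.Gamma a * Real.Gamma b)) = 1 by field_simp]
  exact ENNReal.ofReal_one

section Plumbing

variable {p : ℕ} (c : Fin p → Fin p → ℕ) (j : Fin p)

/-- The pair `{j, k}` as an element of `PairIdx p`. -/
def eIdx (k : {k : Fin p // k ≠ j}) : PairIdx p :=
  if h : j < (k : Fin p) then ⟨(j, k), h⟩
  else ⟨((k : Fin p), j), lt_of_le_of_ne (not_lt.mp h) k.2⟩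

lemma symExtN_eIdx (s : PairIdx p → ℕ) (k : {k : Fin p // k ≠ j}) :
    symExtN s j k = s (eIdx j k) := by
  unfold symExtN eIdx
  by_cases h : j < (k : Fin p)
  · simp [h]
  · have h' : (k : Fin p) < j := lt_of_le_of_ne (not_lt.mp h) k.2
    simp [h, h']

lemma eIdx_val {p : ℕ} (j : Fin p) (k : {k : Fin p // k ≠ j}) :
    (eIdx j k).1 = if j < (k : Fin p) then (j, (k : Fin p)) else ((k : Fin p), j) := by
  unfold eIdx
  split_ifs <;> rfl

/-- The other endpoint of a pair containing `j`. -/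
def otherIdx {p : ℕ} (j : Fin p) (q : PairIdx p) : Fin p :=
  if q.1.1 = j then q.1.2 else q.1.1

lemma otherIdx_ne {p : ℕ} (j : Fin p) (q : PairIdx p) (hq : q.1.1 = j ∨ q.1.2 = j) :
    otherIdx j q ≠ j := by
  unfold otherIdx
  by_cases h : q.1.1 = j
  · rw [if_pos h]
    intro hc
    have hlt := q.2
    rw [h, hc] at hlt
    exact lt_irrefl _ hlt
  · have h2 : q.1.2 = j := hq.resolve_left h
    rw [if_neg h]
    intro hc
    have hlt := q.2
    rw [hc, h2] at hlt
    exact lt_irrefl _ hlt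

lemma eIdx_otherIdx {p : ℕ} (j : Fin p) (q : PairIdx p) (hq : q.1.1 = j ∨ q.1.2 = j) :
    eIdx j ⟨otherIdx j q, otherIdx_ne j q hq⟩ = q := by
  apply Subtype.ext
  rw [eIdx_val]
  show (if j < otherIdx j q then (j, otherIdx j q) else (otherIdx j q, j)) = q.1
  unfold otherIdx
  by_cases h : q.1.1 = j
  · rw [if_pos h, if_pos (show j < q.1.2 from h ▸ q.2), ← h]
  · have h2 : q.1.2 = j := hq.resolve_left h
    rw [if_neg h, if_neg (show ¬ j < q.1.1 from by
        rw [← h2] at hq ⊢; exact not_lt.mpr q.2.le), ← h2]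

lemma otherIdx_eIdx {p : ℕ} (j : Fin p) (k : {k : Fin p // k ≠ j}) :
    otherIdx j (eIdx j k) = (k : Fin p) := by
  unfold otherIdx
  rw [eIdx_val]
  by_cases h : j < (k : Fin p)
  · rw [if_pos h]
    simp
  · rw [if_neg h]
    simp [k.2]

end Plumbing

section MapT

variable {p : ℕ} (c : Fin p → Fin p → ℕ) (j : Fin p)

lemma eIdx_fst_or_snd (k : {k : Fin p // k ≠ j}) :
    (eIdx j k).1.1 = j ∨ (eIdx j k).1.2 = j := by
  by_cases hlt : j < (k : Fin p)
  · left; rw [eIdx_val, if_pos hlt]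
  · right; rw [eIdx_val, if_neg hlt]

lemma pi_nat_singleton {ι : Type*} [Fintype ι] (m : ι → Measure ℕ)
    [∀ i, SigmaFinite (m i)] (f : ι → ℕ) :
    Measure.pi m {f} = ∏ i, m i {f i} := by
  rw [← Set.univ_pi_singleton f, Measure.pi_pi]

lemma nuM_map_tau (hsym : ∀ a b, c b a = c a b) {r : ℝ} (hr0 : 0 < r) (hr1 : r ≤ 1) :
    (Measure.pi fun q : PairIdx p => negBinomialMeasure (c q.1.1 q.1.2) r).map
        (fun s (k : {k : Fin p // k ≠ j}) => s (eIdx j k))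
      = Measure.pi (fun k : {k : Fin p // k ≠ j} => negBinomialMeasure (c j k) r) := by
  classical
  haveI : ∀ q : PairIdx p, IsProbabilityMeasure (negBinomialMeasure (c q.1.1 q.1.2) r) :=
    fun q => nb_isProbability _ hr0 hr1
  apply Measure.ext_of_singleton
  intro σ
  rw [Measure.map_apply (measurable_of_countable _) (measurableSet_singleton σ),
    pi_nat_singleton]
  set σ' : Fin p → ℕ := fun k => if h : k = j then 0 else σ ⟨k, h⟩ with hσ'
  have hσval : ∀ (k : Fin p) (hk : k ≠ j), σ' k = σ ⟨k, hk⟩ := fun k hk => dif_neg hk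
  have hσj : σ' j = 0 := dif_pos rfl
  set d : PairIdx p → Set ℕ :=
    fun q => if q.1.1 = j ∨ q.1.2 = j then {σ' q.1.1 + σ' q.1.2} else Set.univ with hd
  have hpre : (fun (s : PairIdx p → ℕ) (k : {k : Fin p // k ≠ j}) => s (eIdx j k)) ⁻¹' {σ}
      = Set.univ.pi d := by
    ext s
    simp only [Set.mem_preimage, Set.mem_singleton_iff, funext_iff, Set.mem_univ_pi]
    constructor
    · intro h q
      simp only [hd]
      split_ifs with hq
      · have hother := otherIdx_ne j q hq
        have heq := h ⟨otherIdx j q, hother⟩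
        rw [eIdx_otherIdx j q hq] at heq
        simp only [Set.mem_singleton_iff]
        rw [heq, ← hσval _ hother]
        rcases hq with h1 | h2
        · have ho : otherIdx j q = q.1.2 := if_pos h1
          rw [ho, h1, hσj, zero_add]
        · by_cases h1 : q.1.1 = j
          · have ho : otherIdx j q = q.1.2 := if_pos h1
            rw [ho, h1, hσj, zero_add]
          · have ho : otherIdx j q = q.1.1 := if_neg h1
            rw [ho, h2, hσj, add_zero]
      · exact Set.mem_univ _
    · intro h k
      have hmem := h (eIdx j k)
      have hq := eIdx_fst_or_snd j k
      simp only [hd, if_pos hq, Set.mem_singleton_iff] at hmem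
      rw [hmem]
      by_cases hlt : j < (k : Fin p)
      · rw [eIdx_val, if_pos hlt]
        show σ' j + σ' (k : Fin p) = σ k
        rw [hσj, hσval _ k.2, zero_add]
      · rw [eIdx_val, if_neg hlt]
        show σ' (k : Fin p) + σ' j = σ k
        rw [hσj, hσval _ k.2, add_zero]
  rw [hpre, Measure.pi_pi]
  have hfac : ∀ q : PairIdx p, negBinomialMeasure (c q.1.1 q.1.2) r (d q)
      = if q.1.1 = j ∨ q.1.2 = j then nbp (c q.1.1 q.1.2) r (σ' q.1.1 + σ' q.1.2) else 1 := by
    intro q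
    simp only [hd]
    split_ifs with hq
    · exact negBinomialMeasure_singleton _ _ _
    · exact measure_univ
  rw [Finset.prod_congr rfl (fun q _ => hfac q), ← Finset.prod_filter]
  apply Finset.prod_bij
    (i := fun (q : PairIdx p) (hq : q ∈ Finset.univ.filter fun q : PairIdx p =>
        q.1.1 = j ∨ q.1.2 = j) =>
      (⟨otherIdx j q, otherIdx_ne j q (by simpa using hq)⟩ : {k : Fin p // k ≠ j}))
  · intro q hq
    exact Finset.mem_univ _
  · intro q1 hq1 q2 hq2 heq
    have h1 := eIdx_otherIdx j q1 (by simpa using hq1)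
    have h2 := eIdx_otherIdx j q2 (by simpa using hq2)
    rw [← h1, ← h2]
    congr 1
  · intro k _
    refine ⟨eIdx j k, ?_, ?_⟩
    · simp [eIdx_fst_or_snd j k]
    · apply Subtype.ext
      exact otherIdx_eIdx j k
  · intro q hq
    have hq' : q.1.1 = j ∨ q.1.2 = j := by simpa using hq
    rw [negBinomialMeasure_singleton]
    rcases hq' with h1 | h2
    · have ho : otherIdx j q = q.1.2 := if_pos h1
      have hne : q.1.2 ≠ j := ho ▸ otherIdx_ne j q (Or.inl h1)
      simp only [ho]
      rw [← hσval _ hne]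
      rw [show c j (q.1.2) = c q.1.1 q.1.2 by rw [h1]]
      rw [show σ' q.1.1 + σ' q.1.2 = σ' q.1.2 by rw [h1, hσj, zero_add]]
    · by_cases h1 : q.1.1 = j
      · have ho : otherIdx j q = q.1.2 := if_pos h1
        have hne : q.1.2 ≠ j := ho ▸ otherIdx_ne j q (Or.inl h1)
        simp only [ho]
        rw [← hσval _ hne]
        rw [show c j (q.1.2) = c q.1.1 q.1.2 by rw [h1]]
        rw [show σ' q.1.1 + σ' q.1.2 = σ' q.1.2 by rw [h1, hσj, zero_add]]
      · have ho : otherIdx j q = q.1.1 := if_neg h1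
        have hne : q.1.1 ≠ j := ho ▸ otherIdx_ne j q (Or.inr h2)
        simp only [ho]
        rw [← hσval _ hne]
        rw [show c j (q.1.1) = c q.1.1 q.1.2 by rw [h2, hsym]]
        rw [show σ' q.1.1 + σ' q.1.2 = σ' q.1.1 by rw [h2, hσj, add_zero]]

lemma nuM_map_T (hsym : ∀ a b, c b a = c a b) {r : ℝ} (hr0 : 0 < r) (hr1 : r ≤ 1) :
    (Measure.pi fun q : PairIdx p => negBinomialMeasure (c q.1.1 q.1.2) r).map
        (fun s => ∑ k ∈ Finset.univ.erase j, symExtN s j k)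
      = negBinomialMeasure (∑ k ∈ Finset.univ.erase j, c j k) r := by
  classical
  have hT : (fun s : PairIdx p → ℕ => ∑ k ∈ Finset.univ.erase j, symExtN s j k)
      = (fun σ : {k : Fin p // k ≠ j} → ℕ => ∑ k, σ k)
          ∘ (fun s (k : {k : Fin p // k ≠ j}) => s (eIdx j k)) := by
    funext s
    simp only [Function.comp]
    rw [Finset.sum_subtype (p := fun k => k ≠ j) (Finset.univ.erase j) (fun k => by simp)
      (fun k => symExtN s j k)]
    exact Finset.sum_congr rfl fun k _ => symExtN_eIdx j s k
  rw [hT, ← Measure.map_map (measurable_of_countable _) (measurable_of_countable _),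
    nuM_map_tau c j hsym hr0 hr1, negBinomial_pi_map_sum _ hr0.le hr1]
  congr 1
  rw [Finset.sum_subtype (p := fun k => k ≠ j) (Finset.univ.erase j) (fun k => by simp) (fun k => c j k)]

end MapT

section Kernels

variable {p : ℕ} (s0 c0 : ℝ) (c : Fin p → Fin p → ℕ)

def piY (s : PairIdx p → ℕ) : Measure (Fin p → ℝ) :=
  Measure.pi fun j => invBetaMeasure
    (s0 + ∑ k ∈ Finset.univ.erase j, (symExtN s j k : ℝ))
    (c0 + (∑ k ∈ Finset.univ.erase j, (c j k : ℝ)) + 1)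

def nuW (w : ℝ) : Measure (PairIdx p → ℕ) :=
  Measure.pi fun q : PairIdx p => negBinomialMeasure (c q.1.1 q.1.2) (1 / (w + 1))

def FK (w : ℝ) : Measure (ℝ × (PairIdx p → ℕ) × (Fin p → ℝ)) :=
  (nuW c w).bind fun s => (piY s0 c0 c s).map fun y => (w, s, y)

variable {s0 c0}

lemma piY_prob (hs0 : 0 < s0) (hc0 : 0 < c0) (s : PairIdx p → ℕ) :
    IsProbabilityMeasure (piY s0 c0 c s) := by
  haveI : ∀ j : Fin p, IsProbabilityMeasure (invBetaMeasure
      (s0 + ∑ k ∈ Finset.univ.erase j, (symExtN s j k : ℝ))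
      (c0 + (∑ k ∈ Finset.univ.erase j, (c j k : ℝ)) + 1)) := by
    intro j
    apply invBeta_isProbability
    · have : (0:ℝ) ≤ ∑ k ∈ Finset.univ.erase j, (symExtN s j k : ℝ) :=
        Finset.sum_nonneg fun k _ => Nat.cast_nonneg _
      linarith
    · have : (0:ℝ) ≤ ∑ k ∈ Finset.univ.erase j, (c j k : ℝ) :=
        Finset.sum_nonneg fun k _ => Nat.cast_nonneg _
      linarith
  unfold piY
  infer_instance

lemma nuW_prob {w : ℝ} (hw : 0 < w) : IsProbabilityMeasure (nuW c w) := by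
  haveI : ∀ q : PairIdx p, IsProbabilityMeasure
      (negBinomialMeasure (c q.1.1 q.1.2) (1 / (w + 1))) := by
    intro q
    apply nb_isProbability
    · positivity
    · rw [div_le_one (by linarith)]
      linarith
  unfold nuW
  infer_instance

lemma FK_apply (w : ℝ) {B : Set (ℝ × (PairIdx p → ℕ) × (Fin p → ℝ))}
    (hB : MeasurableSet B) :
    FK s0 c0 c w B
      = ∫⁻ s, piY s0 c0 c s ((fun y => (w, s, y)) ⁻¹' B) ∂(nuW c w) := by
  rw [FK, Measure.bind_apply hB (measurable_of_countable _).aemeasurable]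
  exact lintegral_congr fun s => Measure.map_apply (by fun_prop) hB

lemma nuW_singleton (w : ℝ) (s : PairIdx p → ℕ) :
    nuW c w {s} = ∏ q : PairIdx p, nbp (c q.1.1 q.1.2) (1 / (w + 1)) (s q) := by
  rw [nuW, pi_nat_singleton]
  exact Finset.prod_congr rfl fun q _ => negBinomialMeasure_singleton _ _ _

lemma nbp_w_measurable (m n : ℕ) : Measurable fun w : ℝ => nbp m (1 / (w + 1)) n := by
  have m1 : Measurable fun w : ℝ => 1 / (w + 1) :=
    measurable_const.div (measurable_id.add_const 1)
  exact ((measurable_const.mul (m1.pow_const _)).mul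
    ((measurable_const.sub m1).pow_const _)).ennreal_ofReal

lemma FK_measurable (hs0 : 0 < s0) (hc0 : 0 < c0) : Measurable (FK s0 c0 c) := by
  apply Measure.measurable_of_measurable_coe
  intro B hB
  have heq : (fun w => FK s0 c0 c w B)
      = fun w => ∑' s : PairIdx p → ℕ,
          piY s0 c0 c s ((fun y => (w, s, y)) ⁻¹' B) * nuW c w {s} := by
    funext w
    rw [FK_apply c w hB, lintegral_countable']
  rw [heq]
  apply Measurable.ennreal_tsum
  intro s
  haveI := piY_prob c hs0 hc0 s
  apply Measurable.mul
  · have hBs : MeasurableSet ((fun z : ℝ × (Fin p → ℝ) => (z.1, s, z.2)) ⁻¹' B) :=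
      (by fun_prop : Measurable fun z : ℝ × (Fin p → ℝ) => (z.1, s, z.2)) hB
    exact measurable_measure_prodMk_left hBs
  · have h2 : (fun w => nuW c w {s})
        = fun w => ∏ q : PairIdx p, nbp (c q.1.1 q.1.2) (1 / (w + 1)) (s q) :=
      funext fun w => nuW_singleton c w s
    rw [h2]
    exact Finset.measurable_prod _ fun q _ => nbp_w_measurable _ _

lemma invBeta_ae_pos (a b : ℝ) :
    ∀ᵐ x ∂(invBetaMeasure a b), x ∈ Set.Ioi (0:ℝ) := by
  rw [ae_iff]
  have hms : MeasurableSet {x : ℝ | ¬ x ∈ Set.Ioi (0:ℝ)} :=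
    (measurableSet_Ioi).compl
  rw [invBetaMeasure_apply hms]
  rw [setLIntegral_congr_fun hms (fun x hx => ?_), lintegral_zero]
  exact Set.indicator_of_notMem hx _

lemma marg_W (hs0 : 0 < s0) (hc0 : 0 < c0) :
    ((invBetaMeasure s0 (c0 + 1)).bind (FK s0 c0 c)).map Prod.fst
      = invBetaMeasure s0 (c0 + 1) := by
  ext A hA
  rw [Measure.map_apply measurable_fst hA,
    Measure.bind_apply (measurable_fst hA) (FK_measurable c hs0 hc0).aemeasurable]
  have key : ∀ w ∈ Set.Ioi (0:ℝ),
      FK s0 c0 c w (Prod.fst ⁻¹' A) = A.indicator 1 w := by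
    intro w hw
    haveI := nuW_prob c (Set.mem_Ioi.mp hw)
    rw [FK_apply c w (measurable_fst hA)]
    by_cases hw' : w ∈ A
    · have hsec : ∀ s : PairIdx p → ℕ,
          (fun y : Fin p → ℝ => (w, s, y)) ⁻¹' (Prod.fst ⁻¹' A) = Set.univ := by
        intro s; ext y; simp [hw']
      rw [show (∫⁻ s, piY s0 c0 c s ((fun y => (w, s, y)) ⁻¹' (Prod.fst ⁻¹' A)) ∂(nuW c w))
          = ∫⁻ _, 1 ∂(nuW c w) from lintegral_congr fun s => by
            rw [hsec s]; exact (piY_prob c hs0 hc0 s).measure_univ]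
      simp [Set.indicator_of_mem hw']
    · have hsec : ∀ s : PairIdx p → ℕ,
          (fun y : Fin p → ℝ => (w, s, y)) ⁻¹' (Prod.fst ⁻¹' A) = ∅ := by
        intro s; ext y; simp [hw']
      rw [show (∫⁻ s, piY s0 c0 c s ((fun y => (w, s, y)) ⁻¹' (Prod.fst ⁻¹' A)) ∂(nuW c w))
          = ∫⁻ _, 0 ∂(nuW c w) from lintegral_congr fun s => by
            rw [hsec s]; exact measure_empty]
      simp [Set.indicator_of_notMem hw']
  rw [lintegral_congr_ae ((invBeta_ae_pos s0 (c0+1)).mono fun w hw => key w hw),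
    lintegral_indicator_one hA]

end Kernels




section RealAlgebra

variable {s0 c0 : ℝ}

lemma algebra1 (hs0 : 0 < s0) (hc0 : 0 < c0) (Cn t : ℕ) {w : ℝ} (hw : 0 < w) :
    (w ^ (s0 - 1) * (1 + w) ^ (-(s0 + (c0 + 1))) * Real.Gamma (s0 + (c0 + 1)) /
        (Real.Gamma s0 * Real.Gamma (c0 + 1)))
      * ((Nat.multichoose Cn t : ℝ) * (1 / (w + 1)) ^ Cn * (1 - 1 / (w + 1)) ^ t)
    = ((Nat.multichoose Cn t : ℝ) * (Real.Gamma (s0 + (c0 + 1)) /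
        (Real.Gamma s0 * Real.Gamma (c0 + 1))))
      * (w ^ (s0 + (t:ℝ) - 1) * (1 + w) ^ (-(s0 + (t:ℝ) + (c0 + (Cn:ℝ) + 1)))) := by
  have h1w : (0:ℝ) < 1 + w := by linarith
  have e0 : (1:ℝ) / (w + 1) = (1 + w)⁻¹ := by rw [one_div, add_comm]
  have eA : ((1 + w)⁻¹ : ℝ) ^ Cn = (1 + w) ^ (-(Cn:ℝ)) := by
    rw [← Real.rpow_natCast ((1 + w)⁻¹) Cn, Real.inv_rpow h1w.le, ← Real.rpow_neg h1w.le]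
  have eB : (1 - (1 + w)⁻¹ : ℝ) = w * (1 + w)⁻¹ := by
    field_simp
    ring
  have eC : (w * (1 + w)⁻¹ : ℝ) ^ t = w ^ (t:ℝ) * (1 + w) ^ (-(t:ℝ)) := by
    rw [mul_pow, ← Real.rpow_natCast w t, ← Real.rpow_natCast ((1 + w)⁻¹) t,
      Real.inv_rpow h1w.le, ← Real.rpow_neg h1w.le]
  have eD : w ^ (s0 + (t:ℝ) - 1) = w ^ (s0 - 1) * w ^ (t:ℝ) := by
    rw [← Real.rpow_add hw]; congr 1; ring
  have eE : (1 + w) ^ (-(s0 + (t:ℝ) + (c0 + (Cn:ℝ) + 1)))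
      = (1 + w) ^ (-(s0 + (c0 + 1))) * ((1 + w) ^ (-(Cn:ℝ)) * (1 + w) ^ (-(t:ℝ))) := by
    rw [← Real.rpow_add h1w, ← Real.rpow_add h1w]; congr 1; ring
  rw [e0, eA, eB, eC, eD, eE]
  ring

lemma algebra2 (hs0 : 0 < s0) (hc0 : 0 < c0) (Cn t : ℕ) {y : ℝ} (hy : 0 < y) :
    ((Nat.multichoose Cn t : ℝ) * (Real.Gamma (s0 + (c0 + 1)) /
        (Real.Gamma s0 * Real.Gamma (c0 + 1))))
      * (Real.Gamma (s0 + (t:ℝ)) * Real.Gamma (c0 + (Cn:ℝ) + 1) /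
          Real.Gamma (s0 + (t:ℝ) + (c0 + (Cn:ℝ) + 1)))
      * (y ^ (s0 + (t:ℝ) - 1) * (1 + y) ^ (-(s0 + (t:ℝ) + (c0 + (Cn:ℝ) + 1)))
          * Real.Gamma (s0 + (t:ℝ) + (c0 + (Cn:ℝ) + 1)) /
          (Real.Gamma (s0 + (t:ℝ)) * Real.Gamma (c0 + (Cn:ℝ) + 1)))
    = (y ^ (s0 - 1) * (1 + y) ^ (-(s0 + (c0 + 1))) * Real.Gamma (s0 + (c0 + 1)) /
        (Real.Gamma s0 * Real.Gamma (c0 + 1)))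
      * ((Nat.multichoose Cn t : ℝ) * (1 / (y + 1)) ^ Cn * (1 - 1 / (y + 1)) ^ t) := by
  have hGst : (0:ℝ) < Real.Gamma (s0 + (t:ℝ)) :=
    Real.Gamma_pos_of_pos (by positivity)
  have hGc : (0:ℝ) < Real.Gamma (c0 + (Cn:ℝ) + 1) :=
    Real.Gamma_pos_of_pos (by positivity)
  have hGb : (0:ℝ) < Real.Gamma (s0 + (t:ℝ) + (c0 + (Cn:ℝ) + 1)) :=
    Real.Gamma_pos_of_pos (by positivity)
  rw [algebra1 hs0 hc0 Cn t hy]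
  field_simp

end RealAlgebra

lemma pi_eval_apply {ι : Type*} [Fintype ι] [DecidableEq ι] {α : Type*} [MeasurableSpace α]
    (m : ι → Measure α) [∀ i, IsProbabilityMeasure (m i)] (i : ι) {A : Set α}
    (hA : MeasurableSet A) :
    Measure.pi m (Function.eval i ⁻¹' A) = m i A := by
  have hpre : Function.eval i ⁻¹' A
      = Set.univ.pi (fun k => if k = i then A else Set.univ) := by
    ext x
    simp only [Set.mem_preimage, Set.mem_univ_pi]
    constructor
    · intro hx k
      by_cases hk : k = i
      · rw [if_pos hk, hk]; exact hx
      · rw [if_neg hk]; trivial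
    · intro hx
      have h := hx i
      rwa [if_pos rfl] at h
  rw [hpre, Measure.pi_pi,
    Finset.prod_eq_single i (fun k _ hk => by rw [if_neg hk]; exact measure_univ)
      (fun hi => absurd (Finset.mem_univ i) hi), if_pos rfl]

section MargY

variable {p : ℕ} {s0 c0 : ℝ} (c : Fin p → Fin p → ℕ)

lemma marg_Y (hs0 : 0 < s0) (hc0 : 0 < c0) (hsym : ∀ a b : Fin p, c b a = c a b)
    (j : Fin p) :
    ((invBetaMeasure s0 (c0 + 1)).bind (FK s0 c0 c)).map (fun x => x.2.2 j)
      = invBetaMeasure s0 (c0 + 1) := by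
  classical
  set Cn : ℕ := ∑ k ∈ Finset.univ.erase j, c j k with hCn
  set h : ℕ → Measure ℝ := fun t => invBetaMeasure (s0 + (t:ℝ)) (c0 + (Cn:ℝ) + 1) with hh
  have hev : Measurable fun x : ℝ × (PairIdx p → ℕ) × (Fin p → ℝ) => x.2.2 j := by
    fun_prop
  ext A hA
  rw [Measure.map_apply hev hA,
    Measure.bind_apply (hev hA) (FK_measurable c hs0 hc0).aemeasurable]
  -- pointwise identity of the kernel for w > 0
  have key : ∀ w ∈ Set.Ioi (0:ℝ), FK s0 c0 c w ((fun x => x.2.2 j) ⁻¹' A)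
      = ∑' t : ℕ, nbp Cn (1 / (w + 1)) t * h t A := by
    intro w hw
    have hw0 : (0:ℝ) < w := hw
    have hr0 : (0:ℝ) < 1 / (w + 1) := by positivity
    have hr1 : 1 / (w + 1) ≤ 1 := by rw [div_le_one (by linarith)]; linarith
    rw [FK_apply c w (hev hA)]
    have hpiY : ∀ s : PairIdx p → ℕ,
        piY s0 c0 c s ((fun y : Fin p → ℝ => (w, s, y)) ⁻¹' ((fun x => x.2.2 j) ⁻¹' A))
          = h (∑ k ∈ Finset.univ.erase j, symExtN s j k) A := by
      intro s
      have hsec : (fun y : Fin p → ℝ => (w, s, y)) ⁻¹' ((fun x => x.2.2 j) ⁻¹' A)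
          = Function.eval j ⁻¹' A := rfl
      rw [hsec]
      haveI : ∀ j' : Fin p, IsProbabilityMeasure (invBetaMeasure
          (s0 + ∑ k ∈ Finset.univ.erase j', (symExtN s j' k : ℝ))
          (c0 + (∑ k ∈ Finset.univ.erase j', (c j' k : ℝ)) + 1)) := by
        intro j'
        apply invBeta_isProbability
        · have : (0:ℝ) ≤ ∑ k ∈ Finset.univ.erase j', (symExtN s j' k : ℝ) :=
            Finset.sum_nonneg fun k _ => Nat.cast_nonneg _
          linarith
        · have : (0:ℝ) ≤ ∑ k ∈ Finset.univ.erase j', (c j' k : ℝ) :=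
            Finset.sum_nonneg fun k _ => Nat.cast_nonneg _
          linarith
      rw [piY, pi_eval_apply _ j hA, hh]
      have hc1 : s0 + ∑ k ∈ Finset.univ.erase j, (symExtN s j k : ℝ)
          = s0 + ((∑ k ∈ Finset.univ.erase j, symExtN s j k : ℕ) : ℝ) := by
        push_cast; ring
      have hc2 : c0 + (∑ k ∈ Finset.univ.erase j, (c j k : ℝ)) + 1
          = c0 + (Cn:ℝ) + 1 := by
        rw [hCn]; push_cast; ring
      rw [hc1, hc2]
    rw [lintegral_congr hpiY, ← lintegral_map (measurable_of_countable fun t => h t A)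
      (measurable_of_countable _), nuW, nuM_map_T c j hsym hr0 hr1,
      lintegral_countable']
    exact tsum_congr fun t => by
      rw [negBinomialMeasure_singleton, mul_comm]
  rw [lintegral_congr_ae ((invBeta_ae_pos s0 (c0 + 1)).mono fun w hw => key w hw)]
  -- swap sum and integral
  rw [lintegral_tsum fun t =>
    ((nbp_w_measurable Cn t).mul_const _).aemeasurable]
  -- compute the w-integral for each t
  have hIt : ∀ t : ℕ, (∫⁻ w, nbp Cn (1 / (w + 1)) t ∂(invBetaMeasure s0 (c0 + 1)))
      = ENNReal.ofReal ((Nat.multichoose Cn t : ℝ) * (Real.Gamma (s0 + (c0 + 1)) /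
            (Real.Gamma s0 * Real.Gamma (c0 + 1))))
        * ENNReal.ofReal (Real.Gamma (s0 + (t:ℝ)) * Real.Gamma (c0 + (Cn:ℝ) + 1) /
            Real.Gamma (s0 + (t:ℝ) + (c0 + (Cn:ℝ) + 1))) := by
    intro t
    have hdensmeas : Measurable fun x : ℝ =>
        ENNReal.ofReal (x ^ (s0 - 1) * (1 + x) ^ (-(s0 + (c0 + 1))) *
          Real.Gamma (s0 + (c0 + 1)) / (Real.Gamma s0 * Real.Gamma (c0 + 1))) := by
      fun_prop
    rw [invBetaMeasure, lintegral_withDensity_eq_lintegral_mul volume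
      (hdensmeas.indicator measurableSet_Ioi) (nbp_w_measurable Cn t)]
    have hmul : ((Set.Ioi (0:ℝ)).indicator (fun x =>
          ENNReal.ofReal (x ^ (s0 - 1) * (1 + x) ^ (-(s0 + (c0 + 1))) *
            Real.Gamma (s0 + (c0 + 1)) / (Real.Gamma s0 * Real.Gamma (c0 + 1))))
          * fun w => nbp Cn (1 / (w + 1)) t)
        = (Set.Ioi (0:ℝ)).indicator (fun w =>
            ENNReal.ofReal (w ^ (s0 - 1) * (1 + w) ^ (-(s0 + (c0 + 1))) *
              Real.Gamma (s0 + (c0 + 1)) / (Real.Gamma s0 * Real.Gamma (c0 + 1)))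
            * nbp Cn (1 / (w + 1)) t) := by
      funext w
      by_cases hw : w ∈ Set.Ioi (0:ℝ) <;>
        simp [Set.indicator_of_mem, Set.indicator_of_notMem, hw]
    rw [hmul, lintegral_indicator measurableSet_Ioi]
    have hpoint : ∀ w ∈ Set.Ioi (0:ℝ),
        ENNReal.ofReal (w ^ (s0 - 1) * (1 + w) ^ (-(s0 + (c0 + 1))) *
            Real.Gamma (s0 + (c0 + 1)) / (Real.Gamma s0 * Real.Gamma (c0 + 1)))
          * nbp Cn (1 / (w + 1)) t
        = ENNReal.ofReal ((Nat.multichoose Cn t : ℝ) * (Real.Gamma (s0 + (c0 + 1)) /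
              (Real.Gamma s0 * Real.Gamma (c0 + 1))))
          * ENNReal.ofReal (w ^ (s0 + (t:ℝ) - 1) *
              (1 + w) ^ (-(s0 + (t:ℝ) + (c0 + (Cn:ℝ) + 1)))) := by
      intro w hw
      have hw0 : (0:ℝ) < w := hw
      have hGs := Real.Gamma_pos_of_pos hs0
      have hGc1 := Real.Gamma_pos_of_pos (show (0:ℝ) < c0 + 1 by linarith)
      have hGsc := Real.Gamma_pos_of_pos (show (0:ℝ) < s0 + (c0 + 1) by linarith)
      have hdnn : (0:ℝ) ≤ w ^ (s0 - 1) * (1 + w) ^ (-(s0 + (c0 + 1))) *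
          Real.Gamma (s0 + (c0 + 1)) / (Real.Gamma s0 * Real.Gamma (c0 + 1)) := by
        positivity
      rw [nbp, ← ENNReal.ofReal_mul hdnn, algebra1 hs0 hc0 Cn t hw0,
        ENNReal.ofReal_mul (by positivity)]
    rw [setLIntegral_congr_fun measurableSet_Ioi hpoint,
      lintegral_const_mul _ (by fun_prop),
      invBeta_lintegral (show (0:ℝ) < s0 + (t:ℝ) by positivity)
        (show (0:ℝ) < c0 + (Cn:ℝ) + 1 by positivity)]
  rw [tsum_congr fun t => by
    rw [lintegral_mul_const _ (nbp_w_measurable Cn t), hIt t]]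
  -- expand h t via the density and push everything inside one set-lintegral over A
  have hexp : ∀ t : ℕ,
      (ENNReal.ofReal ((Nat.multichoose Cn t : ℝ) * (Real.Gamma (s0 + (c0 + 1)) /
            (Real.Gamma s0 * Real.Gamma (c0 + 1))))
        * ENNReal.ofReal (Real.Gamma (s0 + (t:ℝ)) * Real.Gamma (c0 + (Cn:ℝ) + 1) /
            Real.Gamma (s0 + (t:ℝ) + (c0 + (Cn:ℝ) + 1)))) * h t A
      = ∫⁻ y in A,
          (ENNReal.ofReal ((Nat.multichoose Cn t : ℝ) * (Real.Gamma (s0 + (c0 + 1)) /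
              (Real.Gamma s0 * Real.Gamma (c0 + 1))))
            * ENNReal.ofReal (Real.Gamma (s0 + (t:ℝ)) * Real.Gamma (c0 + (Cn:ℝ) + 1) /
                Real.Gamma (s0 + (t:ℝ) + (c0 + (Cn:ℝ) + 1))))
          * (Set.Ioi (0:ℝ)).indicator (fun y =>
              ENNReal.ofReal (y ^ (s0 + (t:ℝ) - 1) *
                (1 + y) ^ (-(s0 + (t:ℝ) + (c0 + (Cn:ℝ) + 1))) *
                Real.Gamma (s0 + (t:ℝ) + (c0 + (Cn:ℝ) + 1)) /
                (Real.Gamma (s0 + (t:ℝ)) * Real.Gamma (c0 + (Cn:ℝ) + 1)))) y := by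
    intro t
    rw [hh]
    rw [show invBetaMeasure (s0 + (t:ℝ)) (c0 + (Cn:ℝ) + 1) A
        = ∫⁻ y in A, (Set.Ioi (0:ℝ)).indicator (fun y =>
            ENNReal.ofReal (y ^ (s0 + (t:ℝ) - 1) *
              (1 + y) ^ (-(s0 + (t:ℝ) + (c0 + (Cn:ℝ) + 1))) *
              Real.Gamma (s0 + (t:ℝ) + (c0 + (Cn:ℝ) + 1)) /
              (Real.Gamma (s0 + (t:ℝ)) * Real.Gamma (c0 + (Cn:ℝ) + 1)))) y
      from invBetaMeasure_apply hA]
    rw [← lintegral_const_mul _ (Measurable.indicator (by fun_prop) measurableSet_Ioi)]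
  rw [tsum_congr hexp, ← lintegral_tsum fun t =>
    (Measurable.const_mul (Measurable.indicator (by fun_prop) measurableSet_Ioi)
      _).aemeasurable]
  -- pointwise mixture identity
  have hmix : ∀ y : ℝ,
      (∑' t : ℕ,
        (ENNReal.ofReal ((Nat.multichoose Cn t : ℝ) * (Real.Gamma (s0 + (c0 + 1)) /
              (Real.Gamma s0 * Real.Gamma (c0 + 1))))
          * ENNReal.ofReal (Real.Gamma (s0 + (t:ℝ)) * Real.Gamma (c0 + (Cn:ℝ) + 1) /
              Real.Gamma (s0 + (t:ℝ) + (c0 + (Cn:ℝ) + 1))))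
        * (Set.Ioi (0:ℝ)).indicator (fun y =>
            ENNReal.ofReal (y ^ (s0 + (t:ℝ) - 1) *
              (1 + y) ^ (-(s0 + (t:ℝ) + (c0 + (Cn:ℝ) + 1))) *
              Real.Gamma (s0 + (t:ℝ) + (c0 + (Cn:ℝ) + 1)) /
              (Real.Gamma (s0 + (t:ℝ)) * Real.Gamma (c0 + (Cn:ℝ) + 1)))) y)
      = (Set.Ioi (0:ℝ)).indicator (fun y =>
          ENNReal.ofReal (y ^ (s0 - 1) * (1 + y) ^ (-(s0 + (c0 + 1))) *
            Real.Gamma (s0 + (c0 + 1)) / (Real.Gamma s0 * Real.Gamma (c0 + 1)))) y := by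
    intro y
    by_cases hy : y ∈ Set.Ioi (0:ℝ)
    · have hy0 : (0:ℝ) < y := hy
      have hr0 : (0:ℝ) < 1 / (y + 1) := by positivity
      have hr1 : 1 / (y + 1) ≤ 1 := by rw [div_le_one (by linarith)]; linarith
      simp only [Set.indicator_of_mem hy]
      have hterm : ∀ t : ℕ,
          (ENNReal.ofReal ((Nat.multichoose Cn t : ℝ) * (Real.Gamma (s0 + (c0 + 1)) /
                (Real.Gamma s0 * Real.Gamma (c0 + 1))))
            * ENNReal.ofReal (Real.Gamma (s0 + (t:ℝ)) * Real.Gamma (c0 + (Cn:ℝ) + 1) /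
                Real.Gamma (s0 + (t:ℝ) + (c0 + (Cn:ℝ) + 1))))
          * ENNReal.ofReal (y ^ (s0 + (t:ℝ) - 1) *
              (1 + y) ^ (-(s0 + (t:ℝ) + (c0 + (Cn:ℝ) + 1))) *
              Real.Gamma (s0 + (t:ℝ) + (c0 + (Cn:ℝ) + 1)) /
              (Real.Gamma (s0 + (t:ℝ)) * Real.Gamma (c0 + (Cn:ℝ) + 1)))
          = ENNReal.ofReal (y ^ (s0 - 1) * (1 + y) ^ (-(s0 + (c0 + 1))) *
              Real.Gamma (s0 + (c0 + 1)) / (Real.Gamma s0 * Real.Gamma (c0 + 1)))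
            * nbp Cn (1 / (y + 1)) t := by
        intro t
        have hGs := Real.Gamma_pos_of_pos hs0
        have hGc1 := Real.Gamma_pos_of_pos (show (0:ℝ) < c0 + 1 by linarith)
        have hGsc := Real.Gamma_pos_of_pos (show (0:ℝ) < s0 + (c0 + 1) by linarith)
        have hGst := Real.Gamma_pos_of_pos (show (0:ℝ) < s0 + (t:ℝ) by positivity)
        have hGcc := Real.Gamma_pos_of_pos (show (0:ℝ) < c0 + (Cn:ℝ) + 1 by positivity)
        have hGbb := Real.Gamma_pos_of_pos
          (show (0:ℝ) < s0 + (t:ℝ) + (c0 + (Cn:ℝ) + 1) by positivity)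
        rw [nbp, ← ENNReal.ofReal_mul (by positivity), ← ENNReal.ofReal_mul (by positivity),
          ← ENNReal.ofReal_mul (by positivity), algebra2 hs0 hc0 Cn t hy0]
      rw [tsum_congr hterm, ENNReal.tsum_mul_left, nbp_tsum Cn hr0 hr1, mul_one]
    · simp [Set.indicator_of_notMem hy]
  rw [lintegral_congr fun y => hmix y, ← invBetaMeasure_apply hA]
end MargY

/-- In the inverse-beta–negative-binomial hierarchical graphical model, the marginal
law of every node `Y_j` is the inverse beta distribution `IBe(s0, c0 + 1)`; in
particular each `Y_j` has the same marginal law as the anchor variable `W`. -/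
theorem invBetaNegBinomial_marginal_Yj (p : ℕ) (hp : 2 ≤ p) (s0 c0 : ℝ)
    (hs0 : 0 < s0) (hc0 : 0 < c0) (c : Fin p → Fin p → ℕ)
    (hc : ∀ j k, j ≠ k → 1 ≤ c j k) (hsym : ∀ j k, c k j = c j k) (j : Fin p) :
    (invBetaNegBinomialJoint p s0 c0 c).map (fun x => x.2.2 j) =
        invBetaMeasure s0 (c0 + 1) ∧
      (invBetaNegBinomialJoint p s0 c0 c).map (fun x => x.2.2 j) =
        (invBetaNegBinomialJoint p s0 c0 c).map (fun x => x.1) := by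
  have hsym' : ∀ a b : Fin p, c b a = c a b := fun a b => hsym a b
  have hjoint : invBetaNegBinomialJoint p s0 c0 c
      = (invBetaMeasure s0 (c0 + 1)).bind (FK s0 c0 c) := rfl
  have h1 : (invBetaNegBinomialJoint p s0 c0 c).map (fun x => x.2.2 j)
      = invBetaMeasure s0 (c0 + 1) := by
    rw [hjoint]; exact marg_Y c hs0 hc0 hsym' j
  have h2 : (invBetaNegBinomialJoint p s0 c0 c).map (fun x => x.1)
      = invBetaMeasure s0 (c0 + 1) := by
    rw [hjoint]; exact marg_W c hs0 hc0
  exact ⟨h1, h1.trans h2.symm⟩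
end
end
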